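/- arXiv:2604.13005 — 5 statements merged into one kernel-verified Lean document; each statement's English description precedes it below -/
import Mathlib

section
/- Let G be a graph on n vertices and let k₁, k₂ be natural numbers. If the upper-Bell colouring graphs B_{≥k₁}(G) and B_{≥k₂}(G) are isomorphic, then one of the following holds: (i) k₁ > n and k₂ > n; (ii) χ(G) < k₁ ≤ n, χ(G) < k₂ ≤ n, and k₁ = k₂; or (iii) k₁ ≤ χ(G) and k₂ ≤ χ(G). -/
open Finset

variable {V : Type*} [Fintype V] [DecidableEq V]

def IsISP (G : SimpleGraph V) (P : Finpartition (univ : Finset V)) : Prop :=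
  ∀ A ∈ P.parts, ∀ u ∈ A, ∀ v ∈ A, ¬ G.Adj u v

def samePart (P : Finpartition (univ : Finset V)) (u v : V) : Prop :=
  ∃ A ∈ P.parts, u ∈ A ∧ v ∈ A

def MovedBy (P Q : Finpartition (univ : Finset V)) (x : V) : Prop :=
  P ≠ Q ∧ ∀ u v : V, u ≠ x → v ≠ x → (samePart P u v ↔ samePart Q u v)

def BellGraph (G : SimpleGraph V) :
    SimpleGraph {P : Finpartition (univ : Finset V) // IsISP G P} where
  Adj P Q := ∃ x, MovedBy P.1 Q.1 x
  symm := by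
    constructor
    rintro P Q ⟨x, hne, h⟩
    exact ⟨x, Ne.symm hne, fun u v hu hv => (h u v hu hv).symm⟩
  loopless := by
    constructor
    rintro P ⟨x, hne, _⟩
    exact hne rfl

def UpperBell (G : SimpleGraph V) (k : ℕ) :
    SimpleGraph {P : Finpartition (univ : Finset V) // IsISP G P ∧ k ≤ P.parts.card} where
  Adj P Q := ∃ x, MovedBy P.1 Q.1 x
  symm := by
    constructor
    rintro P Q ⟨x, hne, h⟩
    exact ⟨x, Ne.symm hne, fun u v hu hv => (h u v hu hv).symm⟩
  loopless := by
    constructor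
    rintro P ⟨x, hne, _⟩
    exact hne rfl

def IsUniversal (G : SimpleGraph V) (v : V) : Prop :=
  ∀ w, w ≠ v → G.Adj v w

lemma chromatic_le_of_isp (G : SimpleGraph V) {P : Finpartition (univ : Finset V)}
    (hP : IsISP G P) : G.chromaticNumber ≤ (P.parts.card : ℕ∞) := by
  classical
  have C : G.Coloring {A // A ∈ P.parts} := SimpleGraph.Coloring.mk
    (fun v => ⟨P.part v, P.part_mem.2 (mem_univ v)⟩)
    (by
      intro u w huw heq
      have hw : w ∈ P.part u := by
        have := P.mem_part (mem_univ w)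
        rwa [show P.part w = P.part u from congrArg Subtype.val heq.symm] at this
      exact hP (P.part u) (P.part_mem.2 (mem_univ u)) u (P.mem_part (mem_univ u)) w hw huw)
  have := C.colorable.chromaticNumber_le
  rwa [Fintype.card_coe] at this

lemma exists_isp_chrom (G : SimpleGraph V) :
    ∃ P : Finpartition (univ : Finset V), IsISP G P ∧
      P.parts.card = G.chromaticNumber.toNat := by
  classical
  set c := G.chromaticNumber.toNat with hc
  obtain ⟨C⟩ := G.colorable_chromaticNumber_of_fintype
  have hne : G.chromaticNumber ≠ ⊤ := by
    have := (G.colorable_of_fintype).chromaticNumber_le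
    exact (lt_of_le_of_lt this (WithTop.coe_lt_top _)).ne
  have hχ : G.chromaticNumber = (c : ℕ∞) := (ENat.coe_toNat hne).symm
  set P := Finpartition.ofSetoid (Setoid.ker C) with hPdef
  have hparts : P.parts = univ.image fun a ↦ ({b | Setoid.ker C a b} : Finset V) := rfl
  have hmem : ∀ A ∈ P.parts, ∃ a : V, A = univ.filter fun b => C a = C b := by
    intro A hA
    rw [hparts, mem_image] at hA
    obtain ⟨a, -, rfl⟩ := hA
    exact ⟨a, by ext b; simp [Setoid.ker, Function.onFun]⟩
  refine ⟨P, ?_, ?_⟩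
  · intro A hA u hu w hw hadj
    obtain ⟨a, rfl⟩ := hmem A hA
    have h1 := (mem_filter.mp hu).2
    have h2 := (mem_filter.mp hw).2
    exact C.valid hadj (h1 ▸ h2)
  · refine le_antisymm ?_ ?_
    · have hsub : P.parts ⊆ (univ : Finset (Fin c)).image
          (fun i => (univ.filter fun b => i = C b : Finset V)) := by
        intro A hA
        obtain ⟨a, rfl⟩ := hmem A hA
        exact mem_image.mpr ⟨C a, mem_univ _, rfl⟩
      calc P.parts.card ≤ _ := card_le_card hsub
        _ ≤ (univ : Finset (Fin c)).card := card_image_le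
        _ = c := by simp
    · have := chromatic_le_of_isp G (P := P) (by
        intro A hA u hu w hw hadj
        obtain ⟨a, rfl⟩ := hmem A hA
        exact C.valid hadj (((mem_filter.mp hu).2) ▸ (mem_filter.mp hw).2))
      rw [hχ, Nat.cast_le] at this
      exact this

lemma split_isp (G : SimpleGraph V) (P : Finpartition (univ : Finset V)) (hP : IsISP G P)
    (hlt : P.parts.card < Fintype.card V) :
    ∃ Q : Finpartition (univ : Finset V), IsISP G Q ∧ Q.parts.card = P.parts.card + 1 := by
  classical
  -- find a part with at least two elements
  have hbig : ∃ A ∈ P.parts, 1 < A.card := by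
    by_contra hcon
    push_neg at hcon
    have : Fintype.card V ≤ P.parts.card := by
      calc Fintype.card V = (univ : Finset V).card := (Finset.card_univ).symm
        _ = ∑ A ∈ P.parts, A.card := P.sum_card_parts.symm
        _ ≤ ∑ _A ∈ P.parts, 1 := Finset.sum_le_sum (fun A hA => hcon A hA)
        _ = P.parts.card := by simp
    omega
  obtain ⟨A, hA, hAcard⟩ := hbig
  obtain ⟨v, hv, w, hw, hvw⟩ := Finset.one_lt_card.mp hAcard
  have hwv : w ∈ A.erase v := Finset.mem_erase.mpr ⟨hvw.symm, hw⟩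
  -- key disjointness facts
  have hdA : ∀ B ∈ P.parts.erase A, Disjoint A B := fun B hB =>
    P.disjoint hA (Finset.mem_of_mem_erase hB) (Finset.ne_of_mem_erase hB).symm
  have hAe_not : A.erase v ∉ P.parts.erase A := by
    intro hB
    exact (Finset.disjoint_left.mp (hdA _ hB) (Finset.mem_of_mem_erase hwv)) hwv
  have hsing_not : ({v} : Finset V) ∉ insert (A.erase v) (P.parts.erase A) := by
    simp only [Finset.mem_insert]
    rintro (h | h)
    · exact (Finset.notMem_erase v A) (h ▸ Finset.mem_singleton_self v)
    · exact (Finset.disjoint_left.mp (hdA _ h) hv) (by simp)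
  refine ⟨⟨insert {v} (insert (A.erase v) (P.parts.erase A)), ?_, ?_, ?_⟩, ?_, ?_⟩
  · -- supIndep
    rw [Finset.supIndep_iff_pairwiseDisjoint]
    intro X hX Y hY hXY
    simp only [Finset.coe_insert, Set.mem_insert_iff, Finset.mem_coe] at hX hY
    have herase_sub : A.erase v ⊆ A := Finset.erase_subset _ _
    have hvsub : ({v} : Finset V) ⊆ A := Finset.singleton_subset_iff.mpr hv

    have hd0 : Disjoint ({v} : Finset V) (A.erase v) :=
      Finset.disjoint_singleton_left.mpr (Finset.notMem_erase v A)
    show Disjoint X Y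
    rcases hX with rfl | rfl | hX <;> rcases hY with rfl | rfl | hY
    · exact absurd rfl hXY
    · exact hd0
    · exact (hdA _ hY).mono_left hvsub
    · exact hd0.symm
    · exact absurd rfl hXY
    · exact (hdA _ hY).mono_left herase_sub
    · exact ((hdA _ hX).mono_left hvsub).symm
    · exact ((hdA _ hX).mono_left herase_sub).symm
    · exact P.disjoint (Finset.mem_of_mem_erase hX) (Finset.mem_of_mem_erase hY) hXY
  · -- sup_parts
    have h1 : ({v} : Finset V) ⊔ A.erase v = A := by
      ext x
      simp only [Finset.sup_eq_union, Finset.mem_union, Finset.mem_singleton,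
        Finset.mem_erase]
      constructor
      · rintro (rfl | ⟨-, hx⟩); exact hv; exact hx
      · intro hx
        by_cases hxv : x = v
        · exact Or.inl hxv
        · exact Or.inr ⟨hxv, hx⟩
    calc (insert {v} (insert (A.erase v) (P.parts.erase A))).sup id
        = {v} ⊔ (A.erase v ⊔ (P.parts.erase A).sup id) := by
          rw [Finset.sup_insert, Finset.sup_insert]; rfl
      _ = A ⊔ (P.parts.erase A).sup id := by rw [← sup_assoc, h1]
      _ = (insert A (P.parts.erase A)).sup id := by rw [Finset.sup_insert]; rfl
      _ = P.parts.sup id := by rw [Finset.insert_erase hA]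
      _ = univ := P.sup_parts
  · -- not_bot_mem
    simp only [bot_eq_empty, Finset.mem_insert]
    rintro (h | h | h)
    · exact Finset.singleton_ne_empty v h.symm
    · exact Finset.ne_empty_of_mem hwv h.symm
    · exact P.bot_notMem (Finset.mem_of_mem_erase h)
  · -- IsISP
    intro X hX u hu u' hu' hadj
    simp only [Finset.mem_insert] at hX
    rcases hX with rfl | rfl | hX
    · rw [Finset.mem_singleton] at hu hu'
      subst hu; subst hu'; exact G.loopless.irrefl _ hadj
    · exact hP A hA u (Finset.mem_of_mem_erase hu) u' (Finset.mem_of_mem_erase hu') hadj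
    · exact hP X (Finset.mem_of_mem_erase hX) u hu u' hu' hadj
  · -- card
    have hApos : 0 < P.parts.card := Finset.card_pos.mpr ⟨A, hA⟩
    rw [Finset.card_insert_of_notMem hsing_not, Finset.card_insert_of_notMem hAe_not,
      Finset.card_erase_of_mem hA]
    omega

lemma exists_isp (G : SimpleGraph V) (m : ℕ) (h1 : G.chromaticNumber.toNat ≤ m)
    (h2 : m ≤ Fintype.card V) :
    ∃ P : Finpartition (univ : Finset V), IsISP G P ∧ P.parts.card = m := by
  induction m, h1 using Nat.le_induction with
  | base => exact exists_isp_chrom G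
  | succ m hm ih =>
    obtain ⟨P, hP, hcard⟩ := ih (by omega)
    obtain ⟨Q, hQ, hQcard⟩ := split_isp G P hP (by omega)
    exact ⟨Q, hQ, by omega⟩

lemma upper_card_lt (G : SimpleGraph V) (a b : ℕ) (hab : a < b)
    (hbχ : G.chromaticNumber.toNat < b) (hbn : b ≤ Fintype.card V) :
    Nat.card {P : Finpartition (univ : Finset V) // IsISP G P ∧ b ≤ P.parts.card} <
    Nat.card {P : Finpartition (univ : Finset V) // IsISP G P ∧ a ≤ P.parts.card} := by
  classical
  set Tb := {P : Finpartition (univ : Finset V) // IsISP G P ∧ b ≤ P.parts.card}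
  set Ta := {P : Finpartition (univ : Finset V) // IsISP G P ∧ a ≤ P.parts.card}
  let f : Tb → Ta := fun P => ⟨P.1, P.2.1, le_trans (by omega) P.2.2⟩
  have hf : Function.Injective f := by
    intro P Q h
    have h2 := Subtype.ext_iff.mp h
    exact Subtype.ext h2
  obtain ⟨Q₀, hQ₀, hQ₀card⟩ := exists_isp G (b - 1) (by omega) (by omega)
  have hnot : (⟨Q₀, hQ₀, by omega⟩ : Ta) ∉ Set.range f := by
    rintro ⟨P, hP⟩
    have h1 : P.1 = Q₀ := Subtype.ext_iff.mp hP
    have h2 : b ≤ P.1.parts.card := P.2.2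
    rw [h1, hQ₀card] at h2
    omega
  rw [Nat.card_eq_fintype_card, Nat.card_eq_fintype_card]
  exact Fintype.card_lt_of_injective_of_notMem f hf hnot

theorem stmt3 (G : SimpleGraph V) (k₁ k₂ : ℕ)
    (h : Nonempty (UpperBell G k₁ ≃g UpperBell G k₂)) :
    (Fintype.card V < k₁ ∧ Fintype.card V < k₂) ∨
    (G.chromaticNumber < (k₁ : ℕ∞) ∧ k₁ ≤ Fintype.card V ∧
      G.chromaticNumber < (k₂ : ℕ∞) ∧ k₂ ≤ Fintype.card V ∧ k₁ = k₂) ∨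
    ((k₁ : ℕ∞) ≤ G.chromaticNumber ∧ (k₂ : ℕ∞) ≤ G.chromaticNumber) := by
  classical
  set n := Fintype.card V with hn
  have hne : G.chromaticNumber ≠ ⊤ := by
    have := (G.colorable_of_fintype).chromaticNumber_le
    exact (lt_of_le_of_lt this (WithTop.coe_lt_top _)).ne
  set c := G.chromaticNumber.toNat with hcdef
  have hχ : G.chromaticNumber = (c : ℕ∞) := (ENat.coe_toNat hne).symm
  have hcn : c ≤ n := by
    have := (G.colorable_of_fintype).chromaticNumber_le
    rw [hχ, Nat.cast_le] at this
    exact this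
  obtain ⟨e⟩ := h
  have hcard : Nat.card {P : Finpartition (univ : Finset V) // IsISP G P ∧ k₁ ≤ P.parts.card}
      = Nat.card {P : Finpartition (univ : Finset V) // IsISP G P ∧ k₂ ≤ P.parts.card} :=
    Nat.card_congr e.toEquiv
  -- nonempty/empty helpers
  have hpos : ∀ k : ℕ, k ≤ n →
      0 < Nat.card {P : Finpartition (univ : Finset V) // IsISP G P ∧ k ≤ P.parts.card} := by
    intro k hk
    obtain ⟨P, hP, hPc⟩ := exists_isp G (max c k) (le_max_left _ _) (max_le hcn hk)
    have : Nonempty {P : Finpartition (univ : Finset V) // IsISP G P ∧ k ≤ P.parts.card} :=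
      ⟨⟨P, hP, by omega⟩⟩
    exact Nat.card_pos
  have hzero : ∀ k : ℕ, n < k →
      Nat.card {P : Finpartition (univ : Finset V) // IsISP G P ∧ k ≤ P.parts.card} = 0 := by
    intro k hk
    have : IsEmpty {P : Finpartition (univ : Finset V) // IsISP G P ∧ k ≤ P.parts.card} := by
      constructor
      rintro ⟨P, -, hPk⟩
      have := P.card_parts_le_card
      rw [Finset.card_univ] at this
      omega
    exact Nat.card_of_isEmpty
  by_cases hk1n : k₁ ≤ n <;> by_cases hk2n : k₂ ≤ n
  · -- both ≤ n
    by_cases hk1c : k₁ ≤ c <;> by_cases hk2c : k₂ ≤ c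
    · exact Or.inr (Or.inr ⟨by rw [hχ]; exact_mod_cast hk1c, by rw [hχ]; exact_mod_cast hk2c⟩)
    · exfalso
      have := upper_card_lt G k₁ k₂ (by omega) (by omega) hk2n
      omega
    · exfalso
      have := upper_card_lt G k₂ k₁ (by omega) (by omega) hk1n
      omega
    · have heq : k₁ = k₂ := by
        rcases lt_trichotomy k₁ k₂ with hlt | heq | hlt
        · exact absurd hcard (by have := upper_card_lt G k₁ k₂ hlt (by omega) hk2n; omega)
        · exact heq
        · exact absurd hcard (by have := upper_card_lt G k₂ k₁ hlt (by omega) hk1n; omega)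
      exact Or.inr (Or.inl ⟨by rw [hχ]; exact_mod_cast (by omega : c < k₁), hk1n,
        by rw [hχ]; exact_mod_cast (by omega : c < k₂), hk2n, heq⟩)
  · exfalso
    have h1 := hpos k₁ hk1n
    have h2 := hzero k₂ (by omega)
    omega
  · exfalso
    have h1 := hpos k₂ hk2n
    have h2 := hzero k₁ (by omega)
    omega
  · exact Or.inl ⟨by omega, by omega⟩
end

section
/- Every finite graph G on n vertices with maximum degree Δ(G) < n/9 − 1/3 admits a partition of its vertex set into exactly χ(G) independent sets, each of size at least 4. -/
open Finset

variable {V : Type*} [Fintype V] [DecidableEq V]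

lemma greedy_colorable (G : SimpleGraph V) [DecidableRel G.Adj] :
    G.Colorable (G.maxDegree + 1) := by
  suffices h : ∀ s : Finset V, ∃ c : V → Fin (G.maxDegree + 1),
      ∀ u ∈ s, ∀ v ∈ s, G.Adj u v → c u ≠ c v by
    obtain ⟨c, hc⟩ := h univ
    exact ⟨SimpleGraph.Coloring.mk c fun {u v} h => hc u (mem_univ u) v (mem_univ v) h⟩
  intro s
  induction s using Finset.induction with
  | empty => exact ⟨fun _ => 0, by simp⟩
  | @insert a s ha ih =>
    obtain ⟨c, hc⟩ := ih
    have hcard : ((G.neighborFinset a ∩ s).image c).card < Fintype.card (Fin (G.maxDegree + 1)) := by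
      calc ((G.neighborFinset a ∩ s).image c).card ≤ (G.neighborFinset a ∩ s).card :=
            card_image_le
        _ ≤ (G.neighborFinset a).card := card_le_card inter_subset_left
        _ = G.degree a := G.card_neighborFinset_eq_degree a
        _ < G.maxDegree + 1 := Nat.lt_succ_of_le (G.degree_le_maxDegree a)
        _ = Fintype.card (Fin (G.maxDegree + 1)) := by simp
    obtain ⟨j, hj⟩ : ∃ j, j ∉ (G.neighborFinset a ∩ s).image c := by
      by_contra hcon
      push_neg at hcon
      have := Finset.card_le_card (fun j _ => hcon j : (univ : Finset _) ⊆ _)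
      simp only [card_univ] at this
      omega
    refine ⟨Function.update c a j, ?_⟩
    intro u hu v hv huv
    rcases mem_insert.1 hu with rfl | hu'
    · rcases mem_insert.1 hv with rfl | hv'
      · exact absurd huv (G.loopless.irrefl _)
      · have hvne : v ≠ u := fun hvv => ha (hvv ▸ hv')
        rw [Function.update_self, Function.update_of_ne hvne]
        intro hjv
        exact hj (mem_image.2 ⟨v, mem_inter.2 ⟨(G.mem_neighborFinset u v).2 huv, hv'⟩, hjv.symm⟩)
    · rcases mem_insert.1 hv with rfl | hv'
      · have hune : u ≠ v := fun hvv => ha (hvv ▸ hu')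
        rw [Function.update_self, Function.update_of_ne hune]
        intro hju
        exact hj (mem_image.2 ⟨u, mem_inter.2 ⟨(G.mem_neighborFinset v u).2 huv.symm, hu'⟩, hju⟩)
      · have h1 : u ≠ a := fun hh => ha (hh ▸ hu')
        have h2 : v ≠ a := fun hh => ha (hh ▸ hv')
        rw [Function.update_of_ne h1, Function.update_of_ne h2]
        exact hc u hu' v hv' huv

theorem stmt4 (G : SimpleGraph V) [DecidableRel G.Adj]
    (h : (G.maxDegree : ℝ) < (Fintype.card V : ℝ) / 9 - 1 / 3) :
    ∃ P : Finpartition (univ : Finset V), IsISP G P ∧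
      (P.parts.card : ℕ∞) = G.chromaticNumber ∧ ∀ A ∈ P.parts, 4 ≤ A.card := by
  classical
  have hn : 9 * G.maxDegree + 4 ≤ Fintype.card V := by
    have h1 : (9 * G.maxDegree + 3 : ℝ) < (Fintype.card V : ℝ) := by linarith
    have h2 : 9 * G.maxDegree + 3 < Fintype.card V := by exact_mod_cast h1
    omega
  have hVne : Nonempty V := Fintype.card_pos_iff.1 (by omega)
  have hcol : G.Colorable (G.maxDegree + 1) := greedy_colorable G
  have hχle := hcol.chromaticNumber_le
  have hne : G.chromaticNumber ≠ ⊤ :=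
    (lt_of_le_of_lt hχle (WithTop.coe_lt_top _)).ne
  set k := G.chromaticNumber.toNat with hkdef
  have hkχ : (k : ℕ∞) = G.chromaticNumber := ENat.coe_toNat hne
  have hkcol : G.Colorable k := G.colorable_chromaticNumber_of_fintype
  have hkle : k ≤ G.maxDegree + 1 := by
    rw [← hkχ, Nat.cast_le] at hχle; exact hχle
  obtain ⟨C⟩ := hkcol
  -- fibers and deficiency
  let fib : (V → Fin k) → Fin k → Finset V := fun c j => univ.filter (fun u => c u = j)
  let φ : (V → Fin k) → ℕ := fun c => ∑ j : Fin k, (4 - (fib c j).card)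
  let T : Finset (V → Fin k) := univ.filter (fun c => ∀ u v, G.Adj u v → c u ≠ c v)
  have hTne : T.Nonempty := ⟨C, by
    simp only [T, mem_filter, mem_univ, true_and]
    exact fun u v huv => C.valid huv⟩
  obtain ⟨c, hcT, hmin⟩ := T.exists_min_image φ hTne
  have hproper : ∀ u v, G.Adj u v → c u ≠ c v := by
    simpa only [T, mem_filter, mem_univ, true_and] using hcT
  have hmemfib : ∀ (u : V) (j : Fin k), u ∈ fib c j ↔ c u = j := by
    intro u j; simp [fib]
  -- key claim
  have hfib4 : ∀ j : Fin k, 4 ≤ (fib c j).card := by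
    intro i
    by_contra hi
    push_neg at hi
    have hi3 : (fib c i).card ≤ 3 := by omega
    set Sml := univ.filter (fun v : V => (fib c (c v)).card ≤ 4) with hSml
    set Nbr := univ.filter (fun v : V => ∃ u, c u = i ∧ G.Adj u v) with hNbr
    have hNbrcard : Nbr.card ≤ 3 * G.maxDegree := by
      have hsub : Nbr ⊆ (fib c i).biUnion (fun u => G.neighborFinset u) := by
        intro v hv
        simp only [hNbr, mem_filter, mem_univ, true_and] at hv
        obtain ⟨u, hu1, hu2⟩ := hv
        exact mem_biUnion.2 ⟨u, (hmemfib u i).2 hu1, (G.mem_neighborFinset u v).2 hu2⟩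
      calc Nbr.card ≤ ((fib c i).biUnion (fun u => G.neighborFinset u)).card :=
            card_le_card hsub
        _ ≤ ∑ u ∈ fib c i, (G.neighborFinset u).card := card_biUnion_le
        _ ≤ (fib c i).card * G.maxDegree := by
            apply Finset.sum_le_card_nsmul
            intro u _
            rw [G.card_neighborFinset_eq_degree u]
            exact G.degree_le_maxDegree u
        _ ≤ 3 * G.maxDegree := Nat.mul_le_mul_right _ hi3
    have hSmlcard : Sml.card ≤ 3 + 4 * (k - 1) := by
      set J := univ.filter (fun j : Fin k => (fib c j).card ≤ 4) with hJ
      have hiJ : i ∈ J := by simp [hJ]; omega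
      have hsub : Sml ⊆ J.biUnion (fib c) := by
        intro v hv
        simp only [hSml, mem_filter, mem_univ, true_and] at hv
        exact mem_biUnion.2 ⟨c v, by simp [hJ, hv], (hmemfib v (c v)).2 rfl⟩
      calc Sml.card ≤ ∑ j ∈ J, (fib c j).card :=
            le_trans (card_le_card hsub) card_biUnion_le
        _ = (fib c i).card + ∑ j ∈ J.erase i, (fib c j).card :=
            (Finset.add_sum_erase J _ hiJ).symm
        _ ≤ 3 + 4 * (k - 1) := by
            have h1 : ∑ j ∈ J.erase i, (fib c j).card ≤ (J.erase i).card * 4 := by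
              apply Finset.sum_le_card_nsmul
              intro j hj
              have := (mem_filter.1 (mem_of_mem_erase hj)).2
              exact this
            have h2 : (J.erase i).card ≤ k - 1 := by
              have := Finset.card_erase_le (s := J) (a := i)
              have hJk : J.card ≤ k := by
                calc J.card ≤ (univ : Finset (Fin k)).card := card_le_card (filter_subset _ _)
                  _ = k := by simp
              have h3 : (J.erase i).card = J.card - 1 := Finset.card_erase_of_mem hiJ
              omega
            omega
    -- find the vertex v to recolor
    obtain ⟨v, hv⟩ : ∃ v, v ∉ Sml ∪ Nbr := by
      by_contra hcon
      push_neg at hcon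
      have hsub : (univ : Finset V) ⊆ Sml ∪ Nbr := fun x _ => hcon x
      have := card_le_card hsub
      rw [card_univ] at this
      have := Finset.card_union_le Sml Nbr
      have h1 : 1 ≤ k := by
        have : c (Classical.arbitrary V) = c (Classical.arbitrary V) := rfl
        exact (c (Classical.arbitrary V)).pos
      omega
    rw [mem_union, not_or] at hv
    obtain ⟨hvS, hvN⟩ := hv
    have hv5 : 5 ≤ (fib c (c v)).card := by
      simp only [hSml, mem_filter, mem_univ, true_and, not_le] at hvS
      omega
    have hv2 : ∀ u, c u = i → ¬ G.Adj u v := by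
      intro u hu hadj
      exact hvN (by simp only [hNbr, mem_filter, mem_univ, true_and]; exact ⟨u, hu, hadj⟩)
    have hcvi : c v ≠ i := by
      intro hh
      rw [hh] at hv5
      omega
    -- the improved coloring
    set c' := Function.update c v i with hc'
    have hc'T : c' ∈ T := by
      simp only [T, mem_filter, mem_univ, true_and]
      intro u w huw
      simp only [hc']
      rcases eq_or_ne u v with rfl | hu
      · rw [Function.update_self, Function.update_of_ne (G.ne_of_adj huw).symm]
        intro hwi
        exact hv2 w hwi.symm huw.symm
      · rw [Function.update_of_ne hu]
        rcases eq_or_ne w v with rfl | hw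
        · rw [Function.update_self]
          intro hui
          exact hv2 u hui huw
        · rw [Function.update_of_ne hw]
          exact hproper u w huw
    -- fiber computations
    have hfib_i : fib c' i = insert v (fib c i) := by
      ext u
      simp only [fib, mem_filter, mem_univ, true_and, mem_insert]
      rcases eq_or_ne u v with rfl | hu
      · simp [hc', Function.update_self]
      · simp [hc', Function.update_of_ne hu, hu]
    have hvnotin : v ∉ fib c i := by
      rw [hmemfib]; exact hcvi
    have hcard_i : (fib c' i).card = (fib c i).card + 1 := by
      rw [hfib_i, card_insert_of_notMem hvnotin]
    have hfib_cv : fib c' (c v) = (fib c (c v)).erase v := by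
      ext u
      simp only [fib, mem_filter, mem_univ, true_and, mem_erase]
      rcases eq_or_ne u v with rfl | hu
      · simp [hc', Function.update_self, hcvi, Ne.symm hcvi]
      · simp [hc', Function.update_of_ne hu, hu]
    have hvin : v ∈ fib c (c v) := (hmemfib v (c v)).2 rfl
    have hcard_cv : (fib c' (c v)).card = (fib c (c v)).card - 1 := by
      rw [hfib_cv, card_erase_of_mem hvin]
    have hfib_other : ∀ j : Fin k, j ≠ i → j ≠ c v → fib c' j = fib c j := by
      intro j hji hjv
      ext u
      simp only [fib, mem_filter, mem_univ, true_and]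
      rcases eq_or_ne u v with rfl | hu
      · simp [hc', Function.update_self]
        exact ⟨fun hh => absurd hh.symm hji, fun hh => absurd hh.symm hjv⟩
      · simp [hc', Function.update_of_ne hu]
    have hlt : φ c' < φ c := by
      apply Finset.sum_lt_sum
      · intro j _
        rcases eq_or_ne j i with rfl | hji
        · rw [hcard_i]; omega
        rcases eq_or_ne j (c v) with rfl | hjv
        · rw [hcard_cv]; omega
        · rw [hfib_other j hji hjv]
      · exact ⟨i, mem_univ i, by rw [hcard_i]; omega⟩
    exact absurd (hmin c' hc'T) (not_le.2 hlt)
  -- build the partition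
  have hdisj : ∀ j1 j2 : Fin k, fib c j1 ≠ fib c j2 → Disjoint (fib c j1) (fib c j2) := by
    intro j1 j2 hne12
    rw [Finset.disjoint_left]
    intro u h1 h2
    rw [hmemfib] at h1 h2
    exact hne12 (by rw [← h1, ← h2])
  have hinj : Set.InjOn (fun j : Fin k => fib c j) ((univ : Finset (Fin k)) : Set (Fin k)) := by
    intro j1 _ j2 _ hEq
    obtain ⟨u, hu⟩ : (fib c j1).Nonempty := card_pos.1 (by have := hfib4 j1; omega)
    have h1 := (hmemfib u j1).1 hu
    have h2 := (hmemfib u j2).1 (by simpa only [hEq] using hu : u ∈ fib c j2)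
    rw [← h1, ← h2]
  let P : Finpartition (univ : Finset V) :=
    { parts := univ.image (fun j : Fin k => fib c j)
      supIndep := by
        rw [Finset.supIndep_iff_pairwiseDisjoint]
        intro A hA B hB hAB
        simp only [coe_image, coe_univ, Set.image_univ, Set.mem_range] at hA hB
        obtain ⟨j1, rfl⟩ := hA
        obtain ⟨j2, rfl⟩ := hB
        exact hdisj j1 j2 hAB
      sup_parts := by
        ext u
        simp only [mem_sup, mem_image, mem_univ, true_and, iff_true, id]
        exact ⟨fib c (c u), ⟨c u, rfl⟩, (hmemfib u (c u)).2 rfl⟩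
      bot_notMem := by
        rw [bot_eq_empty]
        intro hmem
        obtain ⟨j, _, hj⟩ := mem_image.1 hmem
        have := hfib4 j
        rw [hj] at this
        simp at this }
  have hPparts : P.parts = univ.image (fun j : Fin k => fib c j) := rfl
  have hPcard : P.parts.card = k := by
    rw [hPparts, Finset.card_image_of_injOn hinj, card_univ, Fintype.card_fin]
  refine ⟨P, ?_, ?_, ?_⟩
  · intro A hA u hu v hv hadj
    rw [hPparts] at hA
    obtain ⟨j, _, rfl⟩ := mem_image.1 hA
    have h1 := (hmemfib u j).1 hu
    have h2 := (hmemfib v j).1 hv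
    exact hproper u v hadj (by rw [h1, h2])
  · rw [hPcard, hkχ]
  · intro A hA
    rw [hPparts] at hA
    obtain ⟨j, _, rfl⟩ := mem_image.1 hA
    exact hfib4 j
end

section
/- Let G be a graph on n vertices and let P* denote the partition of V(G) into n singleton parts. The neighbours of P* in the Bell colouring graph B(G) are exactly the partitions obtained from P* by merging two singletons {u},{v} with uv a non-edge of G, and the induced subgraph of B(G) on the open neighbourhood of P* is isomorphic to the line graph of the complement of G. -/
open Finset

variable {V : Type*} [Fintype V] [DecidableEq V]

def lineGraphOf (H : SimpleGraph V) : SimpleGraph H.edgeSet where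
  Adj e f := e ≠ f ∧ ∃ x, x ∈ (e : Sym2 V) ∧ x ∈ (f : Sym2 V)
  symm := by constructor; rintro e f ⟨h, x, hx, hx'⟩; exact ⟨h.symm, x, hx', hx⟩
  loopless := by constructor; rintro e ⟨h, _⟩; exact h rfl

def pairFinset (e : Sym2 V) : Finset V :=
  Sym2.lift ⟨fun a b => {a, b}, fun a b => Finset.pair_comm a b⟩ e

@[simp] lemma pairFinset_mk (a b : V) : pairFinset s(a, b) = {a, b} := rfl

@[simp] lemma mem_pairFinset {e : Sym2 V} {x : V} : x ∈ pairFinset e ↔ x ∈ e := by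
  induction e using Sym2.ind with
  | _ a b => simp [Sym2.mem_iff]

def mergeP (s : Finset V) (hs : s.Nonempty) : Finpartition (univ : Finset V) where
  parts := insert s ((univ \ s).image fun x => ({x} : Finset V))
  supIndep := by
    rw [Finset.supIndep_iff_pairwiseDisjoint]
    intro A hA B hB hAB
    simp only [coe_insert, Set.mem_insert_iff, coe_image, Set.mem_image, mem_coe, mem_sdiff,
      mem_univ, true_and] at hA hB
    obtain rfl | ⟨a, ha, rfl⟩ := hA <;> obtain rfl | ⟨b, hb, rfl⟩ := hB
    · exact absurd rfl hAB
    · simpa [Function.onFun, Finset.disjoint_singleton_right] using hb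
    · simpa [Function.onFun, Finset.disjoint_singleton_left] using ha
    · simp only [Function.onFun, id, Finset.disjoint_singleton]
      exact fun h => hAB (by rw [h])
  sup_parts := by
    apply le_antisymm
    · exact Finset.sup_le fun A _ => A.subset_univ
    · intro x _
      rw [Finset.mem_sup]
      by_cases hxs : x ∈ s
      · exact ⟨s, mem_insert_self _ _, hxs⟩
      · exact ⟨{x}, mem_insert_of_mem (mem_image_of_mem _ (by simp [hxs])),
          mem_singleton_self x⟩
  bot_notMem := by
    simp only [bot_eq_empty, mem_insert, mem_image]
    push_neg
    exact ⟨fun h => hs.ne_empty h.symm, fun a _ => singleton_nonempty a⟩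

lemma mem_mergeP {s : Finset V} {hs : s.Nonempty} {A : Finset V} :
    A ∈ (mergeP s hs).parts ↔ A = s ∨ ∃ a, a ∉ s ∧ A = {a} := by
  simp only [mergeP, mem_insert, mem_image, mem_sdiff, mem_univ, true_and]
  constructor
  · rintro (rfl | ⟨a, ha, rfl⟩)
    · exact Or.inl rfl
    · exact Or.inr ⟨a, ha, rfl⟩
  · rintro (rfl | ⟨a, ha, rfl⟩)
    · exact Or.inl rfl
    · exact Or.inr ⟨a, ha, rfl⟩

lemma samePart_mergeP {s : Finset V} {hs : s.Nonempty} {a b : V} :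
    samePart (mergeP s hs) a b ↔ (a ∈ s ∧ b ∈ s) ∨ a = b := by
  constructor
  · rintro ⟨A, hA, ha, hb⟩
    rcases mem_mergeP.1 hA with rfl | ⟨c, hc, rfl⟩
    · exact Or.inl ⟨ha, hb⟩
    · simp only [mem_singleton] at ha hb
      exact Or.inr (ha.trans hb.symm)
  · rintro (⟨ha, hb⟩ | rfl)
    · exact ⟨s, mem_mergeP.2 (Or.inl rfl), ha, hb⟩
    · by_cases ha : a ∈ s
      · exact ⟨s, mem_mergeP.2 (Or.inl rfl), ha, ha⟩
      · exact ⟨{a}, mem_mergeP.2 (Or.inr ⟨a, ha, rfl⟩), mem_singleton_self a, mem_singleton_self a⟩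

lemma mergeP_ne {s t : Finset V} {hs : s.Nonempty} {ht : t.Nonempty}
    (hs2 : 2 ≤ s.card) (hne : s ≠ t) : mergeP s hs ≠ mergeP t ht := by
  intro h
  have : s ∈ (mergeP t ht).parts := by
    rw [← h]; exact mem_mergeP.2 (Or.inl rfl)
  rcases mem_mergeP.1 this with rfl | ⟨a, _, rfl⟩
  · exact hne rfl
  · simp at hs2

lemma parts_eq_singletons {P : Finpartition (univ : Finset V)}
    (h : ∀ A ∈ P.parts, A.card = 1) :
    P.parts = univ.image fun x => ({x} : Finset V) := by
  ext A
  simp only [mem_image, mem_univ, true_and]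
  constructor
  · intro hA
    obtain ⟨x, hx⟩ := Finset.card_eq_one.1 (h A hA)
    exact ⟨x, hx.symm⟩
  · rintro ⟨x, rfl⟩
    obtain ⟨T, hT, hxT⟩ := P.exists_mem (mem_univ x)
    obtain ⟨y, hy⟩ := Finset.card_eq_one.1 (h T hT)
    rw [hy, mem_singleton] at hxT
    rwa [hxT, ← hy]

lemma samePart_singletons {P : Finpartition (univ : Finset V)}
    (h : ∀ A ∈ P.parts, A.card = 1) {a b : V} :
    samePart P a b ↔ a = b := by
  constructor
  · rintro ⟨A, hA, ha, hb⟩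
    obtain ⟨x, hx⟩ := Finset.card_eq_one.1 (h A hA)
    rw [hx, mem_singleton] at ha hb
    exact ha.trans hb.symm
  · rintro rfl
    obtain ⟨T, hT, haT⟩ := P.exists_mem (mem_univ a)
    exact ⟨T, hT, haT, haT⟩

lemma insert_sdiff_eq_mergeP {P : Finpartition (univ : Finset V)}
    (h : ∀ A ∈ P.parts, A.card = 1) {u v : V} (huv : u ≠ v) :
    insert ({u, v} : Finset V) (P.parts \ {({u} : Finset V), ({v} : Finset V)}) =
      (mergeP {u, v} (Finset.insert_nonempty _ _)).parts := by
  rw [parts_eq_singletons h]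
  ext A
  simp only [mem_insert, mem_sdiff, mem_image, mem_univ, true_and, mem_mergeP,
    mem_singleton]
  constructor
  · rintro (rfl | ⟨⟨a, rfl⟩, hA⟩)
    · exact Or.inl rfl
    · refine Or.inr ⟨a, ?_, rfl⟩
      rintro (rfl | rfl) <;> exact hA (by simp)
  · rintro (rfl | ⟨a, ha, rfl⟩)
    · exact Or.inl rfl
    · simp only [mem_insert, mem_singleton, not_or] at ha
      refine Or.inr ⟨⟨a, rfl⟩, ?_⟩
      simp only [mem_insert, mem_singleton, not_or]
      constructor <;> intro hh <;> [exact ha.1 (by simpa using congrArg (a ∈ ·) hh);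
        exact ha.2 (by simpa using congrArg (a ∈ ·) hh)]

lemma pair_mem_parts_mergeP {u v : V} :
    ({u, v} : Finset V) ∈ (mergeP ({u, v} : Finset V) (Finset.insert_nonempty _ _)).parts :=
  mem_mergeP.2 (Or.inl rfl)

lemma movedBy_merge_shared {u v u' : V} (huv : u ≠ v) (hu'v : u' ≠ v) (huu' : u ≠ u') :
    MovedBy (mergeP {u, v} (Finset.insert_nonempty _ _)) (mergeP {u', v} (Finset.insert_nonempty _ _)) v := by
  constructor
  · apply mergeP_ne
    · rw [Finset.card_insert_of_notMem (by simpa using huv), card_singleton]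
    · intro h
      have : u ∈ ({u', v} : Finset V) := by rw [← h]; simp
      simp only [mem_insert, mem_singleton] at this
      exact this.elim huu' huv
  · intro a b ha hb
    rw [samePart_mergeP, samePart_mergeP]
    simp only [mem_insert, mem_singleton]
    constructor
    · rintro (⟨(rfl | rfl), (rfl | rfl)⟩ | rfl)
      · exact Or.inr rfl
      · exact absurd rfl hb
      · exact absurd rfl ha
      · exact absurd rfl ha
      · exact Or.inr rfl
    · rintro (⟨(rfl | rfl), (rfl | rfl)⟩ | rfl)
      · exact Or.inr rfl
      · exact absurd rfl hb
      · exact absurd rfl ha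
      · exact absurd rfl ha
      · exact Or.inr rfl

lemma movedBy_star_merge {P : Finpartition (univ : Finset V)}
    (h : ∀ A ∈ P.parts, A.card = 1) {u v : V} (huv : u ≠ v) :
    MovedBy P (mergeP {u, v} (Finset.insert_nonempty _ _)) u := by
  constructor
  · intro hPQ
    have := h _ (hPQ ▸ pair_mem_parts_mergeP (u := u) (v := v))
    rw [Finset.card_insert_of_notMem (by simpa using huv), card_singleton] at this
    omega
  · intro a b ha hb
    rw [samePart_singletons h, samePart_mergeP]
    simp only [mem_insert, mem_singleton]
    constructor
    · rintro rfl; exact Or.inr rfl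
    · rintro (⟨(rfl | rfl), (rfl | rfl)⟩ | rfl)
      · rfl
      · exact absurd rfl ha
      · exact absurd rfl hb
      · rfl
      · rfl

lemma exists_merge_of_movedBy {P Q : Finpartition (univ : Finset V)}
    (h : ∀ A ∈ P.parts, A.card = 1) {x : V} (hm : MovedBy P Q x) :
    ∃ y, y ≠ x ∧ Q = mergeP {x, y} (Finset.insert_nonempty _ _) := by
  obtain ⟨hne, hiff⟩ := hm
  have hQ : ∀ a b : V, a ≠ x → b ≠ x → (samePart Q a b ↔ a = b) := fun a b ha hb =>
    (hiff a b ha hb).symm.trans (samePart_singletons h)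
  obtain ⟨B, hB, hxB⟩ := Q.exists_mem (mem_univ x)
  have hsing : ∀ A ∈ Q.parts, A ≠ B → ∃ a, A = {a} ∧ a ≠ x ∧ a ∉ B := by
    intro A hA hAB
    have hxA : x ∉ A := fun hx => hAB (Q.eq_of_mem_parts hA hB hx hxB)
    obtain ⟨a, haA⟩ := Finset.nonempty_iff_ne_empty.2 (by simpa using Q.ne_bot hA)
    have hax : a ≠ x := fun h' => hxA (h' ▸ haA)
    refine ⟨a, ?_, hax, fun haB => hAB (Q.eq_of_mem_parts hA hB haA haB)⟩
    ext b
    rw [mem_singleton]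
    constructor
    · intro hbA
      exact (hQ b a (fun h' => hxA (h' ▸ hbA)) hax).1 ⟨A, hA, hbA, haA⟩
    · rintro rfl; exact haA
  by_cases hBx : B = {x}
  · exfalso
    apply hne
    apply Finpartition.ext
    rw [parts_eq_singletons h]
    ext A
    simp only [mem_image, mem_univ, true_and]
    constructor
    · rintro ⟨a, rfl⟩
      obtain ⟨C, hC, haC⟩ := Q.exists_mem (mem_univ a)
      by_cases hCB : C = B
      · subst hCB
        rw [hBx, mem_singleton] at haC
        rw [haC, ← hBx]; exact hB
      · obtain ⟨c, rfl, -, -⟩ := hsing C hC hCB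
        rw [mem_singleton] at haC
        rw [haC]; exact hC
    · intro hA
      by_cases hAB : A = B
      · exact ⟨x, by rw [hAB, hBx]⟩
      · obtain ⟨a, rfl, -, -⟩ := hsing A hA hAB
        exact ⟨a, rfl⟩
  · have hy : ∃ y ∈ B, y ≠ x := by
      by_contra hc
      push_neg at hc
      exact hBx (le_antisymm (fun b hb => by rw [mem_singleton]; exact hc b hb)
        (by simpa using hxB))
    obtain ⟨y, hyB, hyx⟩ := hy
    have hBxy : B = {x, y} := by
      ext b
      simp only [mem_insert, mem_singleton]
      constructor
      · intro hbB
        by_cases hbx : b = x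
        · exact Or.inl hbx
        · exact Or.inr ((hQ b y hbx hyx).1 ⟨B, hB, hbB, hyB⟩)
      · rintro (rfl | rfl)
        · exact hxB
        · exact hyB
    refine ⟨y, hyx, ?_⟩
    apply Finpartition.ext
    ext A
    rw [mem_mergeP]
    constructor
    · intro hA
      by_cases hAB : A = B
      · exact Or.inl (hAB.trans hBxy)
      · obtain ⟨a, rfl, hax, haB⟩ := hsing A hA hAB
        refine Or.inr ⟨a, ?_, rfl⟩
        simp only [mem_insert, mem_singleton]
        rintro (rfl | rfl)
        · exact hax rfl
        · exact haB hyB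
    · rintro (rfl | ⟨a, ha, rfl⟩)
      · rwa [← hBxy]
      · simp only [mem_insert, mem_singleton, not_or] at ha
        obtain ⟨C, hC, haC⟩ := Q.exists_mem (mem_univ a)
        by_cases hCB : C = B
        · exact absurd (hBxy ▸ hCB ▸ haC) (by simp [ha.1, ha.2])
        · obtain ⟨c, rfl, -, -⟩ := hsing C hC hCB
          rw [mem_singleton] at haC
          rwa [haC]

lemma mergeP_congr {s t : Finset V} {hs : s.Nonempty} {ht : t.Nonempty} (h : s = t) :
    mergeP s hs = mergeP t ht := by subst h; rfl

lemma pairFinset_injective : Function.Injective (pairFinset (V := V)) := by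
  intro e f h
  induction e using Sym2.ind with | _ a b => ?_
  induction f using Sym2.ind with | _ c d => ?_
  simp only [pairFinset_mk] at h
  have ha : a = c ∨ a = d := by
    have : a ∈ ({c, d} : Finset V) := h ▸ (by simp)
    simpa using this
  have hb : b = c ∨ b = d := by
    have : b ∈ ({c, d} : Finset V) := h ▸ (by simp)
    simpa using this
  have hc : c = a ∨ c = b := by
    have : c ∈ ({a, b} : Finset V) := h ▸ (by simp)
    simpa using this
  have hd : d = a ∨ d = b := by
    have : d ∈ ({a, b} : Finset V) := h ▸ (by simp)
    simpa using this
  rw [Sym2.eq_iff]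
  rcases ha with rfl | rfl <;> rcases hb with rfl | rfl <;> tauto

lemma not_adj_of_mem_compl_edge {G : SimpleGraph V} {e : Sym2 V} (he : e ∈ Gᶜ.edgeSet)
    {u v : V} (hu : u ∈ e) (hv : v ∈ e) : ¬G.Adj u v := by
  induction e using Sym2.ind with | _ a b => ?_
  rw [Sym2.mem_iff] at hu hv
  rw [SimpleGraph.mem_edgeSet, G.compl_adj] at he
  rcases hu with rfl | rfl <;> rcases hv with rfl | rfl
  · exact fun h => h.ne rfl
  · exact he.2
  · exact fun h => he.2 h.symm
  · exact fun h => h.ne rfl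

lemma shared_of_movedBy {u v u' v' : V} (huv : u ≠ v) (hu'v' : u' ≠ v')
    {h1 h2} {x : V}
    (hm : MovedBy (mergeP ({u, v} : Finset V) h1) (mergeP ({u', v'} : Finset V) h2) x) :
    ∃ c, c ∈ ({u, v} : Finset V) ∧ c ∈ ({u', v'} : Finset V) := by
  by_contra hc
  push_neg at hc
  have hx1 : x ∈ ({u, v} : Finset V) := by
    by_contra hx
    simp only [mem_insert, mem_singleton, not_or] at hx
    have h3 : samePart (mergeP ({u, v} : Finset V) h1) u v :=
      samePart_mergeP.2 (Or.inl ⟨by simp, by simp⟩)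
    have h4 := (hm.2 u v (Ne.symm hx.1) (Ne.symm hx.2)).1 h3
    rcases samePart_mergeP.1 h4 with ⟨h5, -⟩ | h5
    · exact hc u (by simp) h5
    · exact huv h5
  have hx2 : x ∈ ({u', v'} : Finset V) := by
    by_contra hx
    simp only [mem_insert, mem_singleton, not_or] at hx
    have h3 : samePart (mergeP ({u', v'} : Finset V) h2) u' v' :=
      samePart_mergeP.2 (Or.inl ⟨by simp, by simp⟩)
    have h4 := (hm.2 u' v' (Ne.symm hx.1) (Ne.symm hx.2)).2 h3
    rcases samePart_mergeP.1 h4 with ⟨h5, -⟩ | h5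
    · exact hc u' h5 (by simp)
    · exact hu'v' h5
  exact hc x hx1 hx2

theorem stmt7 (G : SimpleGraph V)
    (Pstar : {P : Finpartition (univ : Finset V) // IsISP G P})
    (hstar : ∀ A ∈ Pstar.1.parts, A.card = 1) :
    (∀ Q : {P : Finpartition (univ : Finset V) // IsISP G P},
      (BellGraph G).Adj Pstar Q ↔
        ∃ u v : V, u ≠ v ∧ ¬ G.Adj u v ∧
          Q.1.parts = insert ({u, v} : Finset V)
            (Pstar.1.parts \ {({u} : Finset V), ({v} : Finset V)})) ∧
    Nonempty
      ((SimpleGraph.induce ((BellGraph G).neighborSet Pstar) (BellGraph G)) ≃g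
        lineGraphOf Gᶜ) := by
  have part1 : ∀ Q : {P : Finpartition (univ : Finset V) // IsISP G P},
      (BellGraph G).Adj Pstar Q ↔
        ∃ u v : V, u ≠ v ∧ ¬ G.Adj u v ∧
          Q.1.parts = insert ({u, v} : Finset V)
            (Pstar.1.parts \ {({u} : Finset V), ({v} : Finset V)}) := by
    intro Q
    constructor
    · rintro ⟨x, hm⟩
      obtain ⟨y, hyx, hQ⟩ := exists_merge_of_movedBy hstar hm
      refine ⟨x, y, Ne.symm hyx, ?_, ?_⟩
      · have hmem : ({x, y} : Finset V) ∈ Q.1.parts := by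
          rw [hQ]; exact pair_mem_parts_mergeP
        exact Q.2 _ hmem x (by simp) y (by simp)
      · rw [hQ, insert_sdiff_eq_mergeP hstar (Ne.symm hyx)]
    · rintro ⟨u, v, huv, hnadj, hparts⟩
      have hQ : Q.1 = mergeP {u, v} (Finset.insert_nonempty _ _) :=
        Finpartition.ext (hparts.trans (insert_sdiff_eq_mergeP hstar huv))
      exact ⟨u, hQ ▸ movedBy_star_merge hstar huv⟩
  refine ⟨part1, ?_⟩
  -- Build the function from edges of Gᶜ to neighbours of Pstar.
  have hne : ∀ e : Gᶜ.edgeSet, (pairFinset e.1).Nonempty :=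
    fun e => ⟨e.1.out.1, mem_pairFinset.2 (Sym2.out_fst_mem e.1)⟩
  have hISP : ∀ e : Gᶜ.edgeSet, IsISP G (mergeP (pairFinset e.1) (hne e)) := by
    intro e A hA u hu v hv
    rcases mem_mergeP.1 hA with rfl | ⟨a, _, rfl⟩
    · exact not_adj_of_mem_compl_edge e.2 (mem_pairFinset.1 hu) (mem_pairFinset.1 hv)
    · rw [mem_singleton] at hu hv
      subst hu; subst hv
      exact fun h => h.ne rfl
  have hrep : ∀ e : Gᶜ.edgeSet, ∃ a b : V, a ≠ b ∧ ¬ G.Adj a b ∧ e.1 = s(a, b) := by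
    rintro ⟨e, he⟩
    induction e using Sym2.ind with | _ a b => ?_
    rw [SimpleGraph.mem_edgeSet, G.compl_adj] at he
    exact ⟨a, b, he.1, he.2, rfl⟩
  have hFmem : ∀ e : Gᶜ.edgeSet,
      (⟨mergeP (pairFinset e.1) (hne e), hISP e⟩ : {P : Finpartition (univ : Finset V) // IsISP G P})
        ∈ (BellGraph G).neighborSet Pstar := by
    intro e
    obtain ⟨a, b, hab, hnadj, hrep'⟩ := hrep e
    rw [SimpleGraph.mem_neighborSet, part1]
    refine ⟨a, b, hab, hnadj, ?_⟩
    show (mergeP (pairFinset e.1) (hne e)).parts = _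
    rw [insert_sdiff_eq_mergeP hstar hab]
    rw [mergeP_congr (show pairFinset e.1 = {a, b} by rw [hrep', pairFinset_mk])]
  set F : Gᶜ.edgeSet → ((BellGraph G).neighborSet Pstar : Set _) :=
    fun e => ⟨⟨mergeP (pairFinset e.1) (hne e), hISP e⟩, hFmem e⟩ with hF
  have hFinj : Function.Injective F := by
    intro e f h
    simp only [hF, Subtype.mk.injEq] at h
    have hparts := congrArg Finpartition.parts h
    have hmem : pairFinset e.1 ∈ (mergeP (pairFinset f.1) (hne f)).parts := by
      rw [← hparts]; exact mem_mergeP.2 (Or.inl rfl)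
    obtain ⟨a, b, hab, -, hrep'⟩ := hrep e
    have hcard : (pairFinset e.1).card = 2 := by
      rw [hrep', pairFinset_mk, Finset.card_insert_of_notMem (by simpa using hab),
        card_singleton]
    rcases mem_mergeP.1 hmem with heq | ⟨c, -, heq⟩
    · exact Subtype.ext (pairFinset_injective heq)
    · rw [heq, card_singleton] at hcard
      omega
  have hFsurj : Function.Surjective F := by
    rintro ⟨Q, hQ⟩
    rw [SimpleGraph.mem_neighborSet, part1] at hQ
    obtain ⟨u, v, huv, hnadj, hparts⟩ := hQ
    have he : s(u, v) ∈ Gᶜ.edgeSet := (SimpleGraph.mem_edgeSet Gᶜ).2 ((G.compl_adj u v).2 ⟨huv, hnadj⟩)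
    refine ⟨⟨s(u, v), he⟩, ?_⟩
    apply Subtype.ext
    apply Subtype.ext
    show mergeP (pairFinset ((⟨s(u, v), he⟩ : Gᶜ.edgeSet) : Sym2 V)) (hne ⟨s(u, v), he⟩) = Q.1
    rw [mergeP_congr (pairFinset_mk u v)]
    exact (Finpartition.ext (hparts.trans (insert_sdiff_eq_mergeP hstar huv))).symm
  have hAdj : ∀ e f : Gᶜ.edgeSet,
      (BellGraph G).Adj (F e).1 (F f).1 ↔ (lineGraphOf Gᶜ).Adj e f := by
    intro e f
    obtain ⟨a, b, hab, -, hrepe⟩ := hrep e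
    obtain ⟨c, d, hcd, -, hrepf⟩ := hrep f
    constructor
    · rintro ⟨x, hm⟩
      refine ⟨fun h => hm.1 (by rw [h]), ?_⟩
      have hm0 : MovedBy (mergeP (pairFinset e.1) (hne e)) (mergeP (pairFinset f.1) (hne f)) x := hm
      have hm' : MovedBy (mergeP ({a, b} : Finset V) (Finset.insert_nonempty _ _))
          (mergeP ({c, d} : Finset V) (Finset.insert_nonempty _ _)) x := by
        rwa [mergeP_congr (show pairFinset e.1 = {a, b} by rw [hrepe, pairFinset_mk]),
          mergeP_congr (show pairFinset f.1 = {c, d} by rw [hrepf, pairFinset_mk])] at hm0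
      obtain ⟨w, hw1, hw2⟩ := shared_of_movedBy hab hcd hm'
      refine ⟨w, ?_, ?_⟩
      · rw [hrepe, Sym2.mem_iff]; simpa using hw1
      · rw [hrepf, Sym2.mem_iff]; simpa using hw2
    · rintro ⟨hef, x, hxe, hxf⟩
      obtain ⟨y, hy⟩ := Sym2.mem_iff_exists.1 hxe
      obtain ⟨z, hz⟩ := Sym2.mem_iff_exists.1 hxf
      have hyx : y ≠ x := by
        have := e.2
        rw [hy, SimpleGraph.mem_edgeSet, G.compl_adj] at this
        exact fun h => this.1 h.symm
      have hzx : z ≠ x := by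
        have := f.2
        rw [hz, SimpleGraph.mem_edgeSet, G.compl_adj] at this
        exact fun h => this.1 h.symm
      have hyz : y ≠ z := by
        intro h
        exact hef (Subtype.ext (by rw [hy, hz, h]))
      refine ⟨x, ?_⟩
      show MovedBy (mergeP (pairFinset e.1) (hne e)) (mergeP (pairFinset f.1) (hne f)) x
      rw [mergeP_congr (show pairFinset e.1 = {y, x} by rw [hy, pairFinset_mk, Finset.pair_comm]),
        mergeP_congr (show pairFinset f.1 = {z, x} by rw [hz, pairFinset_mk, Finset.pair_comm])]
      exact movedBy_merge_shared hyx hzx hyz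
  refine ⟨(SimpleGraph.Iso.symm ?_ : _ ≃g _)⟩
  exact {
    toEquiv := Equiv.ofBijective F ⟨hFinj, hFsurj⟩
    map_rel_iff' := by
      intro e f
      simp only [Equiv.ofBijective_apply, SimpleGraph.comap_adj]
      exact hAdj e f }
end

section
/- Let G be a graph, and let P be an independent set partition of G containing a part A with |A| ≥ 4. Then there exist two distinct vertices a₁, a₂ ∈ A such that the partitions Q₁ and Q₂ obtained from P by splitting a₁ and a₂ respectively (replacing A by A\{aᵢ} and {aᵢ}) are non-adjacent in B(G) and have at least two common neighbours in B(G) that lie outside the closed neighbourhood of P. -/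
open Finset

variable {V : Type*} [Fintype V] [DecidableEq V]

def refine (P : Finpartition (univ : Finset V)) (A : Finset V) (hA : A ∈ P.parts)
    (T : Finset (Finset V)) (hsub : ∀ t ∈ T, t ⊆ A)
    (hdisj : (T : Set (Finset V)).PairwiseDisjoint id)
    (hsup : T.sup id = A) (hbot : ⊥ ∉ T) : Finpartition (univ : Finset V) where
  parts := T ∪ (P.parts \ {A})
  supIndep := by
    rw [Finset.supIndep_iff_pairwiseDisjoint]
    intro x hx y hy hxy
    simp only [Finset.coe_union, Set.mem_union, Finset.coe_sdiff, Set.mem_diff,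
      Finset.mem_coe, Finset.mem_sdiff, Finset.mem_singleton] at hx hy
    have key : ∀ t B : Finset V, t ∈ T → B ∈ P.parts → B ≠ A → Disjoint t B := by
      intro t B ht hB hBA
      exact Finset.disjoint_of_subset_left (hsub t ht)
        (P.disjoint hA hB (Ne.symm hBA)).symm.symm
    rcases hx with hx | ⟨hx, hxA⟩ <;> rcases hy with hy | ⟨hy, hyA⟩
    · exact hdisj hx hy hxy
    · exact key x y hx hy hyA
    · exact (key y x hy hx hxA).symm
    · exact P.disjoint hx hy hxy
  sup_parts := by
    rw [Finset.sup_union, hsup, Finset.sdiff_singleton_eq_erase]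
    have : A ⊔ (P.parts.erase A).sup id = (insert A (P.parts.erase A)).sup id := by
      rw [Finset.sup_insert]; rfl
    rw [this, Finset.insert_erase hA, P.sup_parts]
  bot_notMem := by
    simp only [Finset.mem_union, Finset.mem_sdiff]
    rintro (h | ⟨h, -⟩)
    · exact hbot h
    · exact P.bot_notMem h

lemma refine_isISP (G : SimpleGraph V) (P : Finpartition (univ : Finset V))
    (hP : IsISP G P) (A : Finset V) (hA : A ∈ P.parts)
    (T : Finset (Finset V)) (hsub : ∀ t ∈ T, t ⊆ A)
    (hdisj : (T : Set (Finset V)).PairwiseDisjoint id)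
    (hsup : T.sup id = A) (hbot : ⊥ ∉ T) :
    IsISP G (refine P A hA T hsub hdisj hsup hbot) := by
  intro B hB u hu v hv
  simp only [refine, Finset.mem_union, Finset.mem_sdiff] at hB
  rcases hB with hB | ⟨hB, -⟩
  · exact hP A hA u (hsub B hB hu) v (hsub B hB hv)
  · exact hP B hB u hu v hv

lemma refine_parts (P : Finpartition (univ : Finset V)) (A : Finset V) (hA : A ∈ P.parts)
    (T : Finset (Finset V)) (hsub) (hdisj) (hsup) (hbot) :
    (refine P A hA T hsub hdisj hsup hbot).parts = T ∪ (P.parts \ {A}) := rfl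

lemma samePart_of_mem {P : Finpartition (univ : Finset V)} {B : Finset V} {u v : V}
    (hB : B ∈ P.parts) (hu : u ∈ B) (hv : v ∈ B) : samePart P u v := ⟨B, hB, hu, hv⟩

lemma not_samePart {P : Finpartition (univ : Finset V)} {B : Finset V} {u v : V}
    (hB : B ∈ P.parts) (hu : u ∈ B) (hv : v ∉ B) : ¬ samePart P u v := by
  rintro ⟨C, hC, huC, hvC⟩
  exact hv ((P.eq_of_mem_parts hC hB huC hu) ▸ hvC)

lemma ne_of_samePart {Q R : Finpartition (univ : Finset V)} {u v : V}
    (h1 : samePart Q u v) (h2 : ¬ samePart R u v) : Q ≠ R := fun h => h2 (h ▸ h1)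

lemma movedBy_of {Q R : Finpartition (univ : Finset V)} {x : V} (hne : Q ≠ R)
    (h1 : ∀ B ∈ Q.parts, ∃ C ∈ R.parts, B.erase x ⊆ C)
    (h2 : ∀ C ∈ R.parts, ∃ B ∈ Q.parts, C.erase x ⊆ B) : MovedBy Q R x := by
  refine ⟨hne, fun u v hu hv => ⟨?_, ?_⟩⟩
  · rintro ⟨B, hB, huB, hvB⟩
    obtain ⟨C, hC, hs⟩ := h1 B hB
    exact ⟨C, hC, hs (Finset.mem_erase.2 ⟨hu, huB⟩), hs (Finset.mem_erase.2 ⟨hv, hvB⟩)⟩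
  · rintro ⟨C, hC, huC, hvC⟩
    obtain ⟨B, hB, hs⟩ := h2 C hC
    exact ⟨B, hB, hs (Finset.mem_erase.2 ⟨hu, huC⟩), hs (Finset.mem_erase.2 ⟨hv, hvC⟩)⟩

lemma sing_union {α : Type*} [DecidableEq α] (a : α) (s : Finset α) :
    {a} ∪ s = insert a s := by ext x; simp

lemma pair_union {α : Type*} [DecidableEq α] (a b : α) (s : Finset α) :
    {a, b} ∪ s = insert a (insert b s) := by ext x; simp

lemma exists_refine (P : Finpartition (univ : Finset V)) (A : Finset V) (hA : A ∈ P.parts)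
    (T : Finset (Finset V)) (hsub : ∀ t ∈ T, t ⊆ A)
    (hdisj : (T : Set (Finset V)).PairwiseDisjoint id)
    (hsup : T.sup id = A) (hbot : ⊥ ∉ T) :
    ∃ Q : Finpartition (univ : Finset V), Q.parts = T ∪ (P.parts \ {A}) :=
  ⟨refine P A hA T hsub hdisj hsup hbot, rfl⟩

lemma isISP_of (G : SimpleGraph V) (P Q : Finpartition (univ : Finset V)) (hP : IsISP G P)
    (A : Finset V) (hA : A ∈ P.parts)
    (h : ∀ B ∈ Q.parts, B ⊆ A ∨ B ∈ P.parts) : IsISP G Q := fun B hB u hu v hv => by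
  rcases h B hB with hs | hm
  exacts [hP A hA u (hs hu) v (hs hv), hP B hm u hu v hv]

lemma triple_union {α : Type*} [DecidableEq α] (a b c : α) (s : Finset α) :
    {a, b, c} ∪ s = insert a (insert b (insert c s)) := by ext x; simp

theorem stmt8 (G : SimpleGraph V)
    (P : {P : Finpartition (univ : Finset V) // IsISP G P})
    (A : Finset V) (hA : A ∈ P.1.parts) (hcard : 4 ≤ A.card) :
    ∃ a₁ a₂, a₁ ∈ A ∧ a₂ ∈ A ∧ a₁ ≠ a₂ ∧
      ∃ Q₁ Q₂ : {P : Finpartition (univ : Finset V) // IsISP G P},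
        Q₁.1.parts = insert ({a₁} : Finset V) (insert (A.erase a₁) (P.1.parts \ {A})) ∧
        Q₂.1.parts = insert ({a₂} : Finset V) (insert (A.erase a₂) (P.1.parts \ {A})) ∧
        ¬ (BellGraph G).Adj Q₁ Q₂ ∧
        ∃ R₁ R₂ : {P : Finpartition (univ : Finset V) // IsISP G P},
          R₁ ≠ R₂ ∧
          (BellGraph G).Adj Q₁ R₁ ∧ (BellGraph G).Adj Q₂ R₁ ∧
          (BellGraph G).Adj Q₁ R₂ ∧ (BellGraph G).Adj Q₂ R₂ ∧
          R₁ ≠ P ∧ ¬ (BellGraph G).Adj P R₁ ∧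
          R₂ ≠ P ∧ ¬ (BellGraph G).Adj P R₂ := by
  obtain ⟨a, ha⟩ := Finset.card_pos.mp (show 0 < A.card by omega)
  obtain ⟨b, hb⟩ := Finset.card_pos.mp (show 0 < (A.erase a).card by
    rw [Finset.card_erase_of_mem ha]; omega)
  obtain ⟨c, hc⟩ := Finset.card_pos.mp (show 0 < ((A.erase a).erase b).card by
    rw [Finset.card_erase_of_mem hb, Finset.card_erase_of_mem ha]; omega)
  obtain ⟨d, hd⟩ := Finset.card_pos.mp (show 0 < (((A.erase a).erase b).erase c).card by
    rw [Finset.card_erase_of_mem hc, Finset.card_erase_of_mem hb,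
      Finset.card_erase_of_mem ha]; omega)
  have hb1 : b ≠ a := (Finset.mem_erase.mp hb).1
  have hb2 : b ∈ A := (Finset.mem_erase.mp hb).2
  have hc1 : c ≠ b := (Finset.mem_erase.mp hc).1
  have hc2 : c ≠ a := (Finset.mem_erase.mp (Finset.mem_erase.mp hc).2).1
  have hc3 : c ∈ A := (Finset.mem_erase.mp (Finset.mem_erase.mp hc).2).2
  have hd1 : d ≠ c := (Finset.mem_erase.mp hd).1
  have hd2 : d ≠ b := (Finset.mem_erase.mp (Finset.mem_erase.mp hd).2).1
  have hd3 : d ≠ a :=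
    (Finset.mem_erase.mp (Finset.mem_erase.mp (Finset.mem_erase.mp hd).2).2).1
  have hd4 : d ∈ A :=
    (Finset.mem_erase.mp (Finset.mem_erase.mp (Finset.mem_erase.mp hd).2).2).2
  have hab : a ≠ b := hb1.symm
  -- memberships in erased sets
  have haE2 : a ∈ A.erase b := Finset.mem_erase.mpr ⟨hab, ha⟩
  have hcE1 : c ∈ A.erase a := Finset.mem_erase.mpr ⟨hc2, hc3⟩
  have hcE2 : c ∈ A.erase b := Finset.mem_erase.mpr ⟨hc1, hc3⟩
  have hdE1 : d ∈ A.erase a := Finset.mem_erase.mpr ⟨hd3, hd4⟩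
  have hdE2 : d ∈ A.erase b := Finset.mem_erase.mpr ⟨hd2, hd4⟩
  have haE12 : a ∉ (A.erase a).erase b := fun h =>
    Finset.notMem_erase a A (Finset.mem_erase.mp h).2
  have hbE12 : b ∉ (A.erase a).erase b := Finset.notMem_erase b _
  have hE12sub1 : (A.erase a).erase b ⊆ A.erase a := Finset.erase_subset _ _
  have hE12sub2 : (A.erase a).erase b ⊆ A.erase b := by
    rw [Finset.erase_right_comm]; exact Finset.erase_subset _ _
  have hE12subA : (A.erase a).erase b ⊆ A := hE12sub1.trans (Finset.erase_subset _ _)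
  have hcne : ((A.erase a).erase b : Finset V) ≠ ∅ := fun h => by rw [h] at hc; simp at hc
  -- Q1
  obtain ⟨q1, hq1⟩ := exists_refine P.1 A hA {{a}, A.erase a}
    (by intro t ht
        simp only [Finset.mem_insert, Finset.mem_singleton] at ht
        rcases ht with rfl | rfl
        · simpa using ha
        · exact Finset.erase_subset _ _)
    (by intro x hx y hy hxy
        simp only [Finset.coe_insert, Set.mem_insert_iff, Finset.coe_singleton,
          Set.mem_singleton_iff] at hx hy
        rcases hx with rfl | rfl <;> rcases hy with rfl | rfl
        · exact absurd rfl hxy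
        · exact Finset.disjoint_singleton_left.mpr (Finset.notMem_erase a A)
        · exact (Finset.disjoint_singleton_left.mpr (Finset.notMem_erase a A)).symm
        · exact absurd rfl hxy)
    (by rw [Finset.sup_insert, Finset.sup_singleton]
        show {a} ⊔ A.erase a = A
        rw [Finset.sup_eq_union, sing_union, Finset.insert_erase ha])
    (by simp only [Finset.bot_eq_empty, Finset.mem_insert, Finset.mem_singleton]
        push_neg
        exact ⟨(Finset.singleton_ne_empty a).symm,
          fun h => by rw [← h] at hb; simp at hb⟩)
  rw [pair_union] at hq1
  -- Q2
  obtain ⟨q2, hq2⟩ := exists_refine P.1 A hA {{b}, A.erase b}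
    (by intro t ht
        simp only [Finset.mem_insert, Finset.mem_singleton] at ht
        rcases ht with rfl | rfl
        · simpa using hb2
        · exact Finset.erase_subset _ _)
    (by intro x hx y hy hxy
        simp only [Finset.coe_insert, Set.mem_insert_iff, Finset.coe_singleton,
          Set.mem_singleton_iff] at hx hy
        rcases hx with rfl | rfl <;> rcases hy with rfl | rfl
        · exact absurd rfl hxy
        · exact Finset.disjoint_singleton_left.mpr (Finset.notMem_erase b A)
        · exact (Finset.disjoint_singleton_left.mpr (Finset.notMem_erase b A)).symm
        · exact absurd rfl hxy)
    (by rw [Finset.sup_insert, Finset.sup_singleton]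
        show {b} ⊔ A.erase b = A
        rw [Finset.sup_eq_union, sing_union, Finset.insert_erase hb2])
    (by simp only [Finset.bot_eq_empty, Finset.mem_insert, Finset.mem_singleton]
        push_neg
        exact ⟨(Finset.singleton_ne_empty b).symm,
          fun h => by rw [← h] at haE2; simp at haE2⟩)
  rw [pair_union] at hq2
  -- R1
  obtain ⟨r1, hr1⟩ := exists_refine P.1 A hA {{a}, {b}, (A.erase a).erase b}
    (by intro t ht
        simp only [Finset.mem_insert, Finset.mem_singleton] at ht
        rcases ht with rfl | rfl | rfl
        · simpa using ha
        · simpa using hb2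
        · exact hE12subA)
    (by intro x hx y hy hxy
        simp only [Finset.coe_insert, Set.mem_insert_iff, Finset.coe_singleton,
          Set.mem_singleton_iff] at hx hy
        rcases hx with rfl | rfl | rfl <;> rcases hy with rfl | rfl | rfl
        · exact absurd rfl hxy
        · exact Finset.disjoint_singleton_left.mpr (by simp [hab])
        · exact Finset.disjoint_singleton_left.mpr haE12
        · exact Finset.disjoint_singleton_left.mpr (by simp [hb1])
        · exact absurd rfl hxy
        · exact Finset.disjoint_singleton_left.mpr hbE12
        · exact (Finset.disjoint_singleton_left.mpr haE12).symm
        · exact (Finset.disjoint_singleton_left.mpr hbE12).symm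
        · exact absurd rfl hxy)
    (by ext x
        simp only [Finset.mem_sup, Finset.mem_insert, Finset.mem_singleton, id_eq,
          Finset.mem_erase]
        constructor
        · rintro ⟨v, hv, hxv⟩
          rcases hv with rfl | rfl | rfl
          · rw [Finset.mem_singleton.mp hxv]; exact ha
          · rw [Finset.mem_singleton.mp hxv]; exact hb2
          · exact (Finset.mem_erase.mp (Finset.mem_erase.mp hxv).2).2
        · intro hx
          by_cases h1 : x = a
          · exact ⟨{a}, Or.inl rfl, by simp [h1]⟩
          by_cases h2 : x = b
          · exact ⟨{b}, Or.inr (Or.inl rfl), by simp [h2]⟩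
          · exact ⟨(A.erase a).erase b, Or.inr (Or.inr rfl), by simp [h1, h2, hx]⟩)
    (by simp only [Finset.bot_eq_empty, Finset.mem_insert, Finset.mem_singleton]
        push_neg
        exact ⟨(Finset.singleton_ne_empty a).symm, (Finset.singleton_ne_empty b).symm,
          fun h => hcne h.symm⟩)
  rw [triple_union] at hr1
  -- R2
  obtain ⟨r2, hr2⟩ := exists_refine P.1 A hA {{a, b}, (A.erase a).erase b}
    (by intro t ht
        simp only [Finset.mem_insert, Finset.mem_singleton] at ht
        rcases ht with rfl | rfl
        · intro x hx
          rcases Finset.mem_insert.mp hx with rfl | hx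
          · exact ha
          · rw [Finset.mem_singleton.mp hx]; exact hb2
        · exact hE12subA)
    (by intro x hx y hy hxy
        simp only [Finset.coe_insert, Set.mem_insert_iff, Finset.coe_singleton,
          Set.mem_singleton_iff] at hx hy
        rcases hx with rfl | rfl <;> rcases hy with rfl | rfl
        · exact absurd rfl hxy
        · show Disjoint ({a, b} : Finset V) ((A.erase a).erase b)
          rw [Finset.disjoint_left]
          intro x hx hx2
          rcases Finset.mem_insert.mp hx with rfl | hx
          · exact haE12 hx2
          · rw [Finset.mem_singleton.mp hx] at hx2; exact hbE12 hx2
        · show Disjoint ((A.erase a).erase b) ({a, b} : Finset V)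
          rw [Finset.disjoint_right]
          intro x hx hx2
          rcases Finset.mem_insert.mp hx with rfl | hx
          · exact haE12 hx2
          · rw [Finset.mem_singleton.mp hx] at hx2; exact hbE12 hx2
        · exact absurd rfl hxy)
    (by rw [Finset.sup_insert, Finset.sup_singleton]
        show {a, b} ⊔ (A.erase a).erase b = A
        rw [Finset.sup_eq_union, pair_union, Finset.insert_erase hb,
          Finset.insert_erase ha])
    (by simp only [Finset.bot_eq_empty, Finset.mem_insert, Finset.mem_singleton]
        push_neg
        refine ⟨fun h => ?_, fun h => hcne h.symm⟩
        have : a ∈ (∅ : Finset V) := h ▸ Finset.mem_insert_self a {b}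
        simp at this)
  rw [pair_union] at hr2
  -- IsISP for all four
  have hmemsub : ∀ B ∈ P.1.parts \ {A}, B ∈ P.1.parts := fun B hB => (Finset.mem_sdiff.mp hB).1
  have q1isp : IsISP G q1 := isISP_of G P.1 q1 P.2 A hA (by
    rw [hq1]; intro B hB
    rcases Finset.mem_insert.mp hB with rfl | hB
    · exact Or.inl (by simpa using ha)
    rcases Finset.mem_insert.mp hB with rfl | hB
    · exact Or.inl (Finset.erase_subset _ _)
    · exact Or.inr (hmemsub B hB))
  have q2isp : IsISP G q2 := isISP_of G P.1 q2 P.2 A hA (by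
    rw [hq2]; intro B hB
    rcases Finset.mem_insert.mp hB with rfl | hB
    · exact Or.inl (by simpa using hb2)
    rcases Finset.mem_insert.mp hB with rfl | hB
    · exact Or.inl (Finset.erase_subset _ _)
    · exact Or.inr (hmemsub B hB))
  have r1isp : IsISP G r1 := isISP_of G P.1 r1 P.2 A hA (by
    rw [hr1]; intro B hB
    rcases Finset.mem_insert.mp hB with rfl | hB
    · exact Or.inl (by simpa using ha)
    rcases Finset.mem_insert.mp hB with rfl | hB
    · exact Or.inl (by simpa using hb2)
    rcases Finset.mem_insert.mp hB with rfl | hB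
    · exact Or.inl hE12subA
    · exact Or.inr (hmemsub B hB))
  have r2isp : IsISP G r2 := isISP_of G P.1 r2 P.2 A hA (by
    rw [hr2]; intro B hB
    rcases Finset.mem_insert.mp hB with rfl | hB
    · exact Or.inl (by
        intro x hx
        rcases Finset.mem_insert.mp hx with rfl | hx
        · exact ha
        · rw [Finset.mem_singleton.mp hx]; exact hb2)
    rcases Finset.mem_insert.mp hB with rfl | hB
    · exact Or.inl hE12subA
    · exact Or.inr (hmemsub B hB))
  -- part memberships
  have mq1a : ({a} : Finset V) ∈ q1.parts := by rw [hq1]; simp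
  have mq1E : A.erase a ∈ q1.parts := by rw [hq1]; simp
  have mq2b : ({b} : Finset V) ∈ q2.parts := by rw [hq2]; simp
  have mq2E : A.erase b ∈ q2.parts := by rw [hq2]; simp
  have mr1a : ({a} : Finset V) ∈ r1.parts := by rw [hr1]; simp
  have mr1b : ({b} : Finset V) ∈ r1.parts := by rw [hr1]; simp
  have mr1E : (A.erase a).erase b ∈ r1.parts := by rw [hr1]; simp
  have mr2ab : ({a, b} : Finset V) ∈ r2.parts := by rw [hr2]; simp
  have mr2E : (A.erase a).erase b ∈ r2.parts := by rw [hr2]; simp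
  -- samePart facts
  have spq1bc : samePart q1 b c := ⟨A.erase a, mq1E, hb, hcE1⟩
  have spq1bd : samePart q1 b d := ⟨A.erase a, mq1E, hb, hdE1⟩
  have spq2ac : samePart q2 a c := ⟨A.erase b, mq2E, haE2, hcE2⟩
  have spPac : samePart P.1 a c := ⟨A, hA, ha, hc3⟩
  have spPbd : samePart P.1 b d := ⟨A, hA, hb2, hd4⟩
  have spr2ab : samePart r2 a b :=
    ⟨{a, b}, mr2ab, Finset.mem_insert_self a {b}, by simp⟩
  have npq1ac : ¬ samePart q1 a c :=
    not_samePart mq1a (Finset.mem_singleton_self a) (by simp [hc2])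
  have npq2bd : ¬ samePart q2 b d :=
    not_samePart mq2b (Finset.mem_singleton_self b) (by simp [hd2])
  have npr1bc : ¬ samePart r1 b c :=
    not_samePart mr1b (Finset.mem_singleton_self b) (by simp [hc1])
  have npr1ac : ¬ samePart r1 a c :=
    not_samePart mr1a (Finset.mem_singleton_self a) (by simp [hc2])
  have npr1bd : ¬ samePart r1 b d :=
    not_samePart mr1b (Finset.mem_singleton_self b) (by simp [hd2])
  have npr1ab : ¬ samePart r1 a b :=
    not_samePart mr1a (Finset.mem_singleton_self a) (by simp [hb1])
  have npr2bc : ¬ samePart r2 b c :=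
    not_samePart mr2ab (by simp) (by simp [hc1, hc2])
  have npr2ac : ¬ samePart r2 a c :=
    not_samePart mr2ab (by simp) (by simp [hc1, hc2])
  have npr2bd : ¬ samePart r2 b d :=
    not_samePart mr2ab (by simp) (by simp [hd2, hd3])
  -- subset helpers
  have pair_erase_b : ({a, b} : Finset V).erase b ⊆ {a} := by
    intro x hx
    rw [Finset.mem_erase] at hx
    rcases Finset.mem_insert.mp hx.2 with rfl | h2x
    · simp
    · exact absurd (Finset.mem_singleton.mp h2x) hx.1
  have pair_erase_a : ({a, b} : Finset V).erase a ⊆ {b} := by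
    intro x hx
    rw [Finset.mem_erase] at hx
    rcases Finset.mem_insert.mp hx.2 with rfl | h2x
    · exact absurd rfl hx.1
    · exact h2x
  -- adjacency Q1 R1 (move b)
  have adjQ1R1 : MovedBy q1 r1 b := by
    refine movedBy_of (ne_of_samePart spq1bc npr1bc) ?_ ?_
    · intro B hB
      rw [hq1] at hB
      rcases Finset.mem_insert.mp hB with rfl | hB
      · exact ⟨{a}, mr1a, Finset.erase_subset _ _⟩
      rcases Finset.mem_insert.mp hB with rfl | hB
      · exact ⟨(A.erase a).erase b, mr1E, subset_rfl⟩
      · exact ⟨B, by rw [hr1]; simp [hB], Finset.erase_subset _ _⟩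
    · intro C hC
      rw [hr1] at hC
      rcases Finset.mem_insert.mp hC with rfl | hC
      · exact ⟨{a}, mq1a, Finset.erase_subset _ _⟩
      rcases Finset.mem_insert.mp hC with rfl | hC
      · exact ⟨{a}, mq1a, by rw [Finset.erase_singleton]; exact Finset.empty_subset _⟩
      rcases Finset.mem_insert.mp hC with rfl | hC
      · exact ⟨A.erase a, mq1E, (Finset.erase_subset _ _).trans hE12sub1⟩
      · exact ⟨C, by rw [hq1]; simp [hC], Finset.erase_subset _ _⟩
  -- adjacency Q2 R1 (move a)
  have adjQ2R1 : MovedBy q2 r1 a := by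
    refine movedBy_of (ne_of_samePart spq2ac npr1ac) ?_ ?_
    · intro B hB
      rw [hq2] at hB
      rcases Finset.mem_insert.mp hB with rfl | hB
      · exact ⟨{b}, mr1b, Finset.erase_subset _ _⟩
      rcases Finset.mem_insert.mp hB with rfl | hB
      · exact ⟨(A.erase a).erase b, mr1E, by
          rw [Finset.erase_right_comm]⟩
      · exact ⟨B, by rw [hr1]; simp [hB], Finset.erase_subset _ _⟩
    · intro C hC
      rw [hr1] at hC
      rcases Finset.mem_insert.mp hC with rfl | hC
      · exact ⟨{b}, mq2b, by rw [Finset.erase_singleton]; exact Finset.empty_subset _⟩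
      rcases Finset.mem_insert.mp hC with rfl | hC
      · exact ⟨{b}, mq2b, Finset.erase_subset _ _⟩
      rcases Finset.mem_insert.mp hC with rfl | hC
      · exact ⟨A.erase b, mq2E, (Finset.erase_subset _ _).trans hE12sub2⟩
      · exact ⟨C, by rw [hq2]; simp [hC], Finset.erase_subset _ _⟩
  -- adjacency Q1 R2 (move b)
  have adjQ1R2 : MovedBy q1 r2 b := by
    refine movedBy_of (ne_of_samePart spq1bc npr2bc) ?_ ?_
    · intro B hB
      rw [hq1] at hB
      rcases Finset.mem_insert.mp hB with rfl | hB
      · exact ⟨{a, b}, mr2ab, (Finset.erase_subset _ _).trans (by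
          intro x hx; rw [Finset.mem_singleton.mp hx]; exact Finset.mem_insert_self a {b})⟩
      rcases Finset.mem_insert.mp hB with rfl | hB
      · exact ⟨(A.erase a).erase b, mr2E, subset_rfl⟩
      · exact ⟨B, by rw [hr2]; simp [hB], Finset.erase_subset _ _⟩
    · intro C hC
      rw [hr2] at hC
      rcases Finset.mem_insert.mp hC with rfl | hC
      · exact ⟨{a}, mq1a, pair_erase_b⟩
      rcases Finset.mem_insert.mp hC with rfl | hC
      · exact ⟨A.erase a, mq1E, (Finset.erase_subset _ _).trans hE12sub1⟩
      · exact ⟨C, by rw [hq1]; simp [hC], Finset.erase_subset _ _⟩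
  -- adjacency Q2 R2 (move a)
  have adjQ2R2 : MovedBy q2 r2 a := by
    refine movedBy_of (ne_of_samePart spq2ac npr2ac) ?_ ?_
    · intro B hB
      rw [hq2] at hB
      rcases Finset.mem_insert.mp hB with rfl | hB
      · exact ⟨{a, b}, mr2ab, (Finset.erase_subset _ _).trans (by
          intro x hx; rw [Finset.mem_singleton.mp hx]; simp)⟩
      rcases Finset.mem_insert.mp hB with rfl | hB
      · exact ⟨(A.erase a).erase b, mr2E, by
          rw [Finset.erase_right_comm]⟩
      · exact ⟨B, by rw [hr2]; simp [hB], Finset.erase_subset _ _⟩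
    · intro C hC
      rw [hr2] at hC
      rcases Finset.mem_insert.mp hC with rfl | hC
      · exact ⟨{b}, mq2b, pair_erase_a⟩
      rcases Finset.mem_insert.mp hC with rfl | hC
      · exact ⟨A.erase b, mq2E, (Finset.erase_subset _ _).trans hE12sub2⟩
      · exact ⟨C, by rw [hq2]; simp [hC], Finset.erase_subset _ _⟩
  -- assemble
  refine ⟨a, b, ha, hb2, hab, ⟨q1, q1isp⟩, ⟨q2, q2isp⟩, hq1, hq2, ?_,
    ⟨r1, r1isp⟩, ⟨r2, r2isp⟩, ?_, ⟨b, adjQ1R1⟩, ⟨a, adjQ2R1⟩, ⟨b, adjQ1R2⟩, ⟨a, adjQ2R2⟩,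
    ?_, ?_, ?_, ?_⟩
  · -- ¬ Adj Q1 Q2
    rintro ⟨x, -, h⟩
    have e1 : x = a ∨ x = c := by
      by_contra hcon
      push_neg at hcon
      exact npq1ac ((h a c (Ne.symm hcon.1) (Ne.symm hcon.2)).mpr spq2ac)
    have e2 : x = b ∨ x = d := by
      by_contra hcon
      push_neg at hcon
      exact npq2bd ((h b d (Ne.symm hcon.1) (Ne.symm hcon.2)).mp spq1bd)
    rcases e1 with rfl | rfl <;> rcases e2 with e | e <;> simp_all
  · -- R1 ≠ R2
    intro h
    exact (ne_of_samePart spr2ab npr1ab) (congrArg Subtype.val h).symm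
  · -- R1 ≠ P
    intro h
    exact (ne_of_samePart spPac npr1ac) (congrArg Subtype.val h).symm
  · -- ¬ Adj P R1
    rintro ⟨x, -, h⟩
    have e1 : x = a ∨ x = c := by
      by_contra hcon
      push_neg at hcon
      exact npr1ac ((h a c (Ne.symm hcon.1) (Ne.symm hcon.2)).mp spPac)
    have e2 : x = b ∨ x = d := by
      by_contra hcon
      push_neg at hcon
      exact npr1bd ((h b d (Ne.symm hcon.1) (Ne.symm hcon.2)).mp spPbd)
    rcases e1 with rfl | rfl <;> rcases e2 with e | e <;> simp_all
  · -- R2 ≠ P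
    intro h
    exact (ne_of_samePart spPac npr2ac) (congrArg Subtype.val h).symm
  · -- ¬ Adj P R2
    rintro ⟨x, -, h⟩
    have e1 : x = a ∨ x = c := by
      by_contra hcon
      push_neg at hcon
      exact npr2ac ((h a c (Ne.symm hcon.1) (Ne.symm hcon.2)).mp spPac)
    have e2 : x = b ∨ x = d := by
      by_contra hcon
      push_neg at hcon
      exact npr2bd ((h b d (Ne.symm hcon.1) (Ne.symm hcon.2)).mp spPbd)
    rcases e1 with rfl | rfl <;> rcases e2 with e | e <;> simp_all
end

section
/- Let G be a graph and let P be an independent set partition of G (a vertex of the Bell colouring graph B(G)) containing a part {u,v} of size 2 and a part {w} of size 1 such that neither uw nor vw is an edge of G. Then there exist two non-adjacent neighbours Q₁, Q₂ of P in B(G) such that every common neighbour of Q₁ and Q₂ in B(G) lies in the closed neighbourhood N[P]; in particular P fails the property that any two non-adjacent neighbours of P have a common neighbour outside N[P]. -/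
open Finset

variable {V : Type*} [Fintype V] [DecidableEq V]

lemma samePart_iff (P : Finpartition (univ : Finset V)) (a b : V) :
    samePart P a b ↔ b ∈ P.part a := by
  constructor
  · rintro ⟨A, hA, ha, hb⟩
    rwa [P.part_eq_of_mem hA ha]
  · intro hb
    exact ⟨P.part a, P.part_mem.2 (mem_univ a), P.mem_part (mem_univ a), hb⟩

lemma samePart_refl (P : Finpartition (univ : Finset V)) (a : V) : samePart P a a :=
  ⟨P.part a, P.part_mem.2 (mem_univ a), P.mem_part (mem_univ a), P.mem_part (mem_univ a)⟩

lemma samePart_symm {P : Finpartition (univ : Finset V)} {a b : V}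
    (h : samePart P a b) : samePart P b a := by
  obtain ⟨A, hA, ha, hb⟩ := h; exact ⟨A, hA, hb, ha⟩

lemma samePart_trans {P : Finpartition (univ : Finset V)} {a b c : V}
    (h1 : samePart P a b) (h2 : samePart P b c) : samePart P a c := by
  obtain ⟨A, hA, ha, hb⟩ := h1
  obtain ⟨B, hB, hb', hc⟩ := h2
  have hAB := P.eq_of_mem_parts hA hB hb hb'
  subst hAB
  exact ⟨A, hA, ha, hc⟩

instance decSamePart (P : Finpartition (univ : Finset V)) : DecidableRel (samePart P) :=
  fun a b => decidable_of_iff _ (samePart_iff P a b).symm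

lemma finpartition_eq_of_samePart {P Q : Finpartition (univ : Finset V)}
    (h : ∀ a b, samePart P a b ↔ samePart Q a b) : P = Q := by
  have hpart : ∀ a : V, P.part a = Q.part a := by
    intro a
    ext b
    rw [← samePart_iff, ← samePart_iff, h]
  apply Finpartition.ext
  ext A
  constructor
  · intro hA
    obtain ⟨a, ha⟩ := P.nonempty_of_mem_parts hA
    rw [← P.part_eq_of_mem hA ha, hpart]
    exact Q.part_mem.2 (mem_univ a)
  · intro hA
    obtain ⟨a, ha⟩ := Q.nonempty_of_mem_parts hA
    rw [← Q.part_eq_of_mem hA ha, ← hpart]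
    exact P.part_mem.2 (mem_univ a)

def splitSetoid (P : Finpartition (univ : Finset V)) (u : V) : Setoid V where
  r a b := a = b ∨ (a ≠ u ∧ b ≠ u ∧ samePart P a b)
  iseqv := by
    refine ⟨fun a => Or.inl rfl, ?_, ?_⟩
    · rintro a b (rfl | ⟨ha, hb, h⟩)
      · exact Or.inl rfl
      · exact Or.inr ⟨hb, ha, samePart_symm h⟩
    · rintro a b c (rfl | ⟨ha, hb, h⟩) h2
      · exact h2
      · rcases h2 with rfl | ⟨hb', hc, h'⟩
        · exact Or.inr ⟨ha, hb, h⟩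
        · exact Or.inr ⟨ha, hc, samePart_trans h h'⟩

instance (P : Finpartition (univ : Finset V)) (u : V) : DecidableRel (splitSetoid P u).r :=
  fun a b => inferInstanceAs (Decidable (a = b ∨ (a ≠ u ∧ b ≠ u ∧ samePart P a b)))

def mergeSetoid (P : Finpartition (univ : Finset V)) (T : Finset V) : Setoid V where
  r a b := (samePart P a b ∧ a ∉ T ∧ b ∉ T) ∨ (a ∈ T ∧ b ∈ T)
  iseqv := by
    refine ⟨fun a => ?_, ?_, ?_⟩
    · by_cases ha : a ∈ T
      · exact Or.inr ⟨ha, ha⟩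
      · exact Or.inl ⟨samePart_refl P a, ha, ha⟩
    · rintro a b (⟨h, ha, hb⟩ | ⟨ha, hb⟩)
      · exact Or.inl ⟨samePart_symm h, hb, ha⟩
      · exact Or.inr ⟨hb, ha⟩
    · rintro a b c (⟨h, ha, hb⟩ | ⟨ha, hb⟩) (⟨h', hb', hc⟩ | ⟨hb', hc⟩)
      · exact Or.inl ⟨samePart_trans h h', ha, hc⟩
      · exact absurd hb' hb
      · exact absurd hb hb'
      · exact Or.inr ⟨ha, hc⟩

instance (P : Finpartition (univ : Finset V)) (T : Finset V) :
    DecidableRel (mergeSetoid P T).r :=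
  fun a b => inferInstanceAs
    (Decidable ((samePart P a b ∧ a ∉ T ∧ b ∉ T) ∨ (a ∈ T ∧ b ∈ T)))

lemma samePart_ofSetoid (s : Setoid V) [DecidableRel s.r] (a b : V) :
    samePart (Finpartition.ofSetoid s) a b ↔ s.r a b :=
  (samePart_iff _ a b).trans Finpartition.mem_part_ofSetoid_iff_rel

theorem stmt10 (G : SimpleGraph V)
    (P : {P : Finpartition (univ : Finset V) // IsISP G P})
    (u v w : V) (huv : u ≠ v)
    (h1 : ({u, v} : Finset V) ∈ P.1.parts) (h2 : ({w} : Finset V) ∈ P.1.parts)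
    (e1 : ¬ G.Adj u w) (e2 : ¬ G.Adj v w) :
    (∃ Q₁ Q₂, (BellGraph G).Adj P Q₁ ∧ (BellGraph G).Adj P Q₂ ∧
      ¬ (BellGraph G).Adj Q₁ Q₂ ∧
      ∀ R, (BellGraph G).Adj Q₁ R → (BellGraph G).Adj Q₂ R →
        (R = P ∨ (BellGraph G).Adj P R)) ∧
    ¬ (∀ Q₁ Q₂, (BellGraph G).Adj P Q₁ → (BellGraph G).Adj P Q₂ →
        ¬ (BellGraph G).Adj Q₁ Q₂ →
        ∃ R, (BellGraph G).Adj Q₁ R ∧ (BellGraph G).Adj Q₂ R ∧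
          R ≠ P ∧ ¬ (BellGraph G).Adj P R) := by
  classical
  have hu_mem : u ∈ ({u, v} : Finset V) := mem_insert_self _ _
  have hv_mem : v ∈ ({u, v} : Finset V) := by simp
  have hw_mem : w ∈ ({w} : Finset V) := mem_singleton_self _
  have hwu : w ≠ u := by
    intro h
    have hA : ({w} : Finset V) = {u, v} :=
      P.1.eq_of_mem_parts h2 h1 hw_mem (by simp [h])
    have hv' : v ∈ ({w} : Finset V) := by rw [hA]; exact hv_mem
    exact huv (h.symm.trans (mem_singleton.mp hv').symm)
  have hwv : w ≠ v := by
    intro h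
    have hA : ({w} : Finset V) = {u, v} :=
      P.1.eq_of_mem_parts h2 h1 hw_mem (by simp [h])
    have hu' : u ∈ ({w} : Finset V) := by rw [hA]; exact hu_mem
    exact huv ((mem_singleton.mp hu').trans h)
  have pu : samePart P.1 u v := ⟨_, h1, hu_mem, hv_mem⟩
  have hPu : ∀ b, samePart P.1 u b → b = u ∨ b = v := by
    rintro b ⟨A, hA, ha, hb⟩
    have hAe := P.1.eq_of_mem_parts hA h1 ha hu_mem
    subst hAe
    simpa using hb
  have hPv : ∀ b, samePart P.1 v b → b = u ∨ b = v := by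
    rintro b ⟨A, hA, ha, hb⟩
    have hAe := P.1.eq_of_mem_parts hA h1 ha hv_mem
    subst hAe
    simpa using hb
  have hPw : ∀ b, samePart P.1 w b → b = w := by
    rintro b ⟨A, hA, ha, hb⟩
    have hAe := P.1.eq_of_mem_parts hA h2 ha hw_mem
    subst hAe
    simpa using hb
  set T : Finset V := {u, v, w} with hTdef
  have Tu : u ∈ T := by simp [hTdef]
  have Tv : v ∈ T := by simp [hTdef]
  have Tw : w ∈ T := by simp [hTdef]
  have hTel : ∀ a, a ∈ T → a ≠ w → a = u ∨ a = v := by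
    intro a ha hne
    have : a = u ∨ a = v ∨ a = w := by simpa [hTdef] using ha
    tauto
  set Q1p : Finpartition (univ : Finset V) := Finpartition.ofSetoid (splitSetoid P.1 u)
    with hQ1def
  set Q2p : Finpartition (univ : Finset V) := Finpartition.ofSetoid (mergeSetoid P.1 T)
    with hQ2def
  have hQ1 : ∀ a b, samePart Q1p a b ↔ (a = b ∨ (a ≠ u ∧ b ≠ u ∧ samePart P.1 a b)) :=
    fun a b => samePart_ofSetoid (splitSetoid P.1 u) a b
  have hQ2 : ∀ a b, samePart Q2p a b ↔
      ((samePart P.1 a b ∧ a ∉ T ∧ b ∉ T) ∨ (a ∈ T ∧ b ∈ T)) :=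
    fun a b => samePart_ofSetoid (mergeSetoid P.1 T) a b
  have padj : ∀ a b, samePart P.1 a b → ¬ G.Adj a b := by
    rintro a b ⟨A, hA, ha, hb⟩
    exact P.2 A hA a ha b hb
  have hnadjuv : ¬ G.Adj u v := padj u v pu
  have isp1 : IsISP G Q1p := by
    intro A hA a ha b hb
    rcases (hQ1 a b).1 ⟨A, hA, ha, hb⟩ with rfl | ⟨_, _, h⟩
    · exact G.loopless.irrefl a
    · exact padj a b h
  have isp2 : IsISP G Q2p := by
    intro A hA a ha b hb
    rcases (hQ2 a b).1 ⟨A, hA, ha, hb⟩ with ⟨h, _, _⟩ | ⟨ha', hb'⟩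
    · exact padj a b h
    · have ha'' : a = u ∨ a = v ∨ a = w := by simpa [hTdef] using ha'
      have hb'' : b = u ∨ b = v ∨ b = w := by simpa [hTdef] using hb'
      rcases ha'' with rfl | rfl | rfl <;> rcases hb'' with rfl | rfl | rfl
      · exact G.loopless.irrefl _
      · exact hnadjuv
      · exact e1
      · exact fun h => hnadjuv h.symm
      · exact G.loopless.irrefl _
      · exact e2
      · exact fun h => e1 h.symm
      · exact fun h => e2 h.symm
      · exact G.loopless.irrefl _
  have adj1 : (BellGraph G).Adj P ⟨Q1p, isp1⟩ := by
    refine ⟨u, ?_, ?_⟩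
    · intro hEq
      have h' : samePart P.1 u v := pu
      rw [hEq] at h'
      rcases (hQ1 u v).1 h' with h'' | ⟨h'', _, _⟩
      · exact huv h''
      · exact h'' rfl
    · intro a b ha hb
      rw [hQ1]
      constructor
      · intro h; exact Or.inr ⟨ha, hb, h⟩
      · rintro (rfl | ⟨_, _, h⟩)
        · exact samePart_refl _ _
        · exact h
  have adj2 : (BellGraph G).Adj P ⟨Q2p, isp2⟩ := by
    refine ⟨w, ?_, ?_⟩
    · intro hEq
      have h' : samePart Q2p u w := (hQ2 u w).2 (Or.inr ⟨Tu, Tw⟩)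
      have h'' : samePart P.1 u w := by rw [hEq]; exact h'
      rcases hPu w h'' with h | h
      · exact hwu h
      · exact hwv h
    · intro a b ha hb
      rw [hQ2]
      constructor
      · intro h
        by_cases haT : a ∈ T
        · refine Or.inr ⟨haT, ?_⟩
          have ha' := hTel a haT ha
          have hb' : b = u ∨ b = v := by
            rcases ha' with rfl | rfl
            · exact hPu b h
            · exact hPv b h
          rcases hb' with rfl | rfl
          · exact Tu
          · exact Tv
        · refine Or.inl ⟨h, haT, ?_⟩
          intro hbT
          apply haT
          have hb' := hTel b hbT hb
          have ha2 : a = u ∨ a = v := by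
            rcases hb' with rfl | rfl
            · exact hPu a (samePart_symm h)
            · exact hPv a (samePart_symm h)
          rcases ha2 with rfl | rfl
          · exact Tu
          · exact Tv
      · rintro (⟨h, _, _⟩ | ⟨haT, hbT⟩)
        · exact h
        · have ha' := hTel a haT ha
          have hb' := hTel b hbT hb
          rcases ha' with rfl | rfl <;> rcases hb' with rfl | rfl
          · exact samePart_refl _ _
          · exact pu
          · exact samePart_symm pu
          · exact samePart_refl _ _
  have n1uv : ¬ samePart Q1p u v := by
    rw [hQ1]
    rintro (h | ⟨h, _, _⟩)
    · exact huv h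
    · exact h rfl
  have n1uw : ¬ samePart Q1p u w := by
    rw [hQ1]
    rintro (h | ⟨h, _, _⟩)
    · exact hwu h.symm
    · exact h rfl
  have n1vw : ¬ samePart Q1p v w := by
    rw [hQ1]
    rintro (h | ⟨_, _, h⟩)
    · exact hwv h.symm
    · rcases hPv w h with h' | h'
      · exact hwu h'
      · exact hwv h'
  have t2 : ∀ a b, a ∈ T → b ∈ T → samePart Q2p a b :=
    fun a b ha hb => (hQ2 a b).2 (Or.inr ⟨ha, hb⟩)
  have nonadj : ¬ (BellGraph G).Adj ⟨Q1p, isp1⟩ ⟨Q2p, isp2⟩ := by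
    rintro ⟨x, hne, hpair⟩
    by_cases hxu : x = u
    · subst hxu
      exact n1vw ((hpair v w (Ne.symm huv) hwu).2 (t2 v w Tv Tw))
    · by_cases hxv : x = v
      · subst hxv
        exact n1uw ((hpair u w huv hwv).2 (t2 u w Tu Tw))
      · exact n1uv ((hpair u v (fun h => hxu h.symm) (fun h => hxv h.symm)).2
          (t2 u v Tu Tv))
  have hcommon : ∀ R : {P : Finpartition (univ : Finset V) // IsISP G P},
      (BellGraph G).Adj ⟨Q1p, isp1⟩ R → (BellGraph G).Adj ⟨Q2p, isp2⟩ R →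
      (R = P ∨ (BellGraph G).Adj P R) := by
    rintro R ⟨x, hxne, hx⟩ ⟨y, hyne, hy⟩
    have hx' : ∀ a b, a ≠ x → b ≠ x →
        (samePart R.1 a b ↔ (a = b ∨ (a ≠ u ∧ b ≠ u ∧ samePart P.1 a b))) :=
      fun a b ha hb => ((hx a b ha hb).symm).trans (hQ1 a b)
    have hy' : ∀ a b, a ≠ y → b ≠ y →
        (samePart R.1 a b ↔ ((samePart P.1 a b ∧ a ∉ T ∧ b ∉ T) ∨ (a ∈ T ∧ b ∈ T))) :=
      fun a b ha hb => ((hy a b ha hb).symm).trans (hQ2 a b)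
    have hgood : ∀ a b, a ≠ x → b ≠ x → a ≠ y → b ≠ y →
        (samePart Q1p a b ↔ samePart Q2p a b) :=
      fun a b h1' h2' h3' h4' => (hx a b h1' h2').trans ((hy a b h3' h4').symm)
    have contra : ∀ a b : V, ((a = u ∧ b = v) ∨ (a = u ∧ b = w) ∨ (a = v ∧ b = w)) →
        ¬ (samePart Q1p a b ↔ samePart Q2p a b) := by
      rintro a b (⟨rfl, rfl⟩ | ⟨rfl, rfl⟩ | ⟨rfl, rfl⟩) hiff
      · exact n1uv (hiff.2 (t2 _ _ Tu Tv))
      · exact n1uw (hiff.2 (t2 _ _ Tu Tw))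
      · exact n1vw (hiff.2 (t2 _ _ Tv Tw))
    have hxT : x = u ∨ x = v ∨ x = w := by
      by_contra hc
      push_neg at hc
      obtain ⟨hxu, hxv, hxw⟩ := hc
      rcases eq_or_ne y u with rfl | hyu
      · exact contra v w (Or.inr (Or.inr ⟨rfl, rfl⟩))
          (hgood v w (Ne.symm hxv) (Ne.symm hxw) (Ne.symm huv) hwu)
      · rcases eq_or_ne y v with rfl | hyv
        · exact contra u w (Or.inr (Or.inl ⟨rfl, rfl⟩))
            (hgood u w (Ne.symm hxu) (Ne.symm hxw) huv hwv)
        · exact contra u v (Or.inl ⟨rfl, rfl⟩)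
            (hgood u v (Ne.symm hxu) (Ne.symm hxv) (Ne.symm hyu) (Ne.symm hyv))
    have hyT : y = u ∨ y = v ∨ y = w := by
      by_contra hc
      push_neg at hc
      obtain ⟨hyu, hyv, hyw⟩ := hc
      rcases hxT with rfl | rfl | rfl
      · exact contra v w (Or.inr (Or.inr ⟨rfl, rfl⟩))
          (hgood v w (Ne.symm huv) hwu (Ne.symm hyv) (Ne.symm hyw))
      · exact contra u w (Or.inr (Or.inl ⟨rfl, rfl⟩))
          (hgood u w huv hwv (Ne.symm hyu) (Ne.symm hyw))
      · exact contra u v (Or.inl ⟨rfl, rfl⟩)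
          (hgood u v (Ne.symm hwu) (Ne.symm hwv) (Ne.symm hyu) (Ne.symm hyv))
    have hxy : x ≠ y := by
      rintro rfl
      rcases hxT with rfl | rfl | rfl
      · exact contra v w (Or.inr (Or.inr ⟨rfl, rfl⟩))
          (hgood v w (Ne.symm huv) hwu (Ne.symm huv) hwu)
      · exact contra u w (Or.inr (Or.inl ⟨rfl, rfl⟩))
          (hgood u w huv hwv huv hwv)
      · exact contra u v (Or.inl ⟨rfl, rfl⟩)
          (hgood u v (Ne.symm hwu) (Ne.symm hwv) (Ne.symm hwu) (Ne.symm hwv))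
    obtain hx1 | hx1 | hx1 := hxT <;> obtain hy1 | hy1 | hy1 := hyT <;>
      rw [hx1] at hx' <;> rw [hy1] at hy' <;> rw [hx1, hy1] at hxy
    · exact absurd rfl hxy
    · -- x = u, y = v : P moved by u
      right
      have ruw : samePart R.1 u w := (hy' u w huv hwv).2 (Or.inr ⟨Tu, Tw⟩)
      have nrvw : ¬ samePart R.1 v w := by
        intro h
        rcases (hx' v w (Ne.symm huv) hwu).1 h with h' | ⟨_, _, h'⟩
        · exact hwv h'.symm
        · rcases hPv w h' with h'' | h''
          · exact hwu h''
          · exact hwv h''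
      have nruv : ¬ samePart R.1 u v := fun h => nrvw (samePart_trans (samePart_symm h) ruw)
      refine ⟨u, ?_, ?_⟩
      · intro hEq; exact nruv (hEq ▸ pu)
      · intro a b ha hb
        rw [hx' a b ha hb]
        constructor
        · intro h; exact Or.inr ⟨ha, hb, h⟩
        · rintro (rfl | ⟨_, _, h⟩)
          · exact samePart_refl _ _
          · exact h
    · -- x = u, y = w : R = P
      left
      have c1 : ∀ a b, a ≠ u → b ≠ u → (samePart R.1 a b ↔ samePart P.1 a b) := by
        intro a b ha hb
        rw [hx' a b ha hb]
        constructor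
        · rintro (rfl | ⟨_, _, h⟩)
          · exact samePart_refl _ _
          · exact h
        · intro h; exact Or.inr ⟨ha, hb, h⟩
      have rv : samePart R.1 u v := (hy' u v (Ne.symm hwu) (Ne.symm hwv)).2 (Or.inr ⟨Tu, Tv⟩)
      have c3 : ¬ samePart R.1 v w := by
        intro h
        rcases hPv w ((c1 v w (Ne.symm huv) hwu).1 h) with h' | h'
        · exact hwu h'
        · exact hwv h'
      have c4 : ¬ samePart R.1 u w := fun h => c3 (samePart_trans (samePart_symm rv) h)
      have claim2 : ∀ b, samePart R.1 u b ↔ samePart P.1 u b := by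
        intro b
        rcases eq_or_ne b u with rfl | hbu
        · exact iff_of_true (samePart_refl _ _) (samePart_refl _ _)
        rcases eq_or_ne b v with rfl | hbv
        · exact iff_of_true rv pu
        rcases eq_or_ne b w with rfl | hbw
        · refine iff_of_false c4 (fun h => ?_)
          rcases hPu b h with h' | h'
          · exact hwu h'
          · exact hwv h'
        · refine iff_of_false ?_ ?_
          · intro h
            rcases (hy' u b (Ne.symm hwu) hbw).1 h with ⟨_, hT, _⟩ | ⟨_, hbT⟩
            · exact hT Tu
            · rcases hTel b hbT hbw with h' | h'
              · exact hbu h'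
              · exact hbv h'
          · intro h
            rcases hPu b h with h' | h'
            · exact hbu h'
            · exact hbv h'
      have hiff : ∀ a b, samePart R.1 a b ↔ samePart P.1 a b := by
        intro a b
        rcases eq_or_ne a u with rfl | hau
        · exact claim2 b
        rcases eq_or_ne b u with rfl | hbu
        · exact ⟨fun h => samePart_symm ((claim2 a).1 (samePart_symm h)),
                 fun h => samePart_symm ((claim2 a).2 (samePart_symm h))⟩
        · exact c1 a b hau hbu
      exact Subtype.ext (finpartition_eq_of_samePart hiff)
    · -- x = v, y = u : P moved by v
      right
      have rvw : samePart R.1 v w := (hy' v w (Ne.symm huv) hwu).2 (Or.inr ⟨Tv, Tw⟩)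
      have nruw : ¬ samePart R.1 u w := by
        intro h
        rcases (hx' u w huv hwv).1 h with h' | ⟨h', _, _⟩
        · exact hwu h'.symm
        · exact h' rfl
      have nruv : ¬ samePart R.1 u v := fun h => nruw (samePart_trans h rvw)
      refine ⟨v, ?_, ?_⟩
      · intro hEq; exact nruv (hEq ▸ pu)
      · intro a b ha hb
        rw [hx' a b ha hb]
        constructor
        · intro h
          rcases eq_or_ne a b with rfl | hab
          · exact Or.inl rfl
          · refine Or.inr ⟨?_, ?_, h⟩
            · rintro rfl
              rcases hPu b h with h'' | h''
              · exact hab h''.symm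
              · exact hb h''
            · rintro rfl
              rcases hPu a (samePart_symm h) with h'' | h''
              · exact hab h''
              · exact ha h''
        · rintro (rfl | ⟨_, _, h⟩)
          · exact samePart_refl _ _
          · exact h
    · exact absurd rfl hxy
    · -- x = v, y = w : R = P
      left
      have c1 : ∀ a b, a ≠ v → b ≠ v → (samePart R.1 a b ↔ samePart P.1 a b) := by
        intro a b ha hb
        rw [hx' a b ha hb]
        constructor
        · rintro (rfl | ⟨_, _, h⟩)
          · exact samePart_refl _ _
          · exact h
        · intro h
          rcases eq_or_ne a b with rfl | hab
          · exact Or.inl rfl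
          · refine Or.inr ⟨?_, ?_, h⟩
            · rintro rfl
              rcases hPu b h with h'' | h''
              · exact hab h''.symm
              · exact hb h''
            · rintro rfl
              rcases hPu a (samePart_symm h) with h'' | h''
              · exact hab h''
              · exact ha h''
      have rv : samePart R.1 v u := (hy' v u (Ne.symm hwv) (Ne.symm hwu)).2 (Or.inr ⟨Tv, Tu⟩)
      have c3 : ¬ samePart R.1 u w := by
        intro h
        rcases hPu w ((c1 u w huv hwv).1 h) with h' | h'
        · exact hwu h'
        · exact hwv h'
      have c4 : ¬ samePart R.1 v w := fun h => c3 (samePart_trans (samePart_symm rv) h)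
      have claim2 : ∀ b, samePart R.1 v b ↔ samePart P.1 v b := by
        intro b
        rcases eq_or_ne b v with rfl | hbv
        · exact iff_of_true (samePart_refl _ _) (samePart_refl _ _)
        rcases eq_or_ne b u with rfl | hbu
        · exact iff_of_true rv (samePart_symm pu)
        rcases eq_or_ne b w with rfl | hbw
        · refine iff_of_false c4 (fun h => ?_)
          rcases hPv b h with h' | h'
          · exact hwu h'
          · exact hwv h'
        · refine iff_of_false ?_ ?_
          · intro h
            rcases (hy' v b (Ne.symm hwv) hbw).1 h with ⟨_, hT, _⟩ | ⟨_, hbT⟩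
            · exact hT Tv
            · rcases hTel b hbT hbw with h' | h'
              · exact hbu h'
              · exact hbv h'
          · intro h
            rcases hPv b h with h' | h'
            · exact hbu h'
            · exact hbv h'
      have hiff : ∀ a b, samePart R.1 a b ↔ samePart P.1 a b := by
        intro a b
        rcases eq_or_ne a v with rfl | hav
        · exact claim2 b
        rcases eq_or_ne b v with rfl | hbv
        · exact ⟨fun h => samePart_symm ((claim2 a).1 (samePart_symm h)),
                 fun h => samePart_symm ((claim2 a).2 (samePart_symm h))⟩
        · exact c1 a b hav hbv
      exact Subtype.ext (finpartition_eq_of_samePart hiff)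
    · -- x = w, y = u : P moved by v
      right
      have nruv : ¬ samePart R.1 u v := by
        intro h
        rcases (hx' u v (Ne.symm hwu) (Ne.symm hwv)).1 h with h' | ⟨h', _, _⟩
        · exact huv h'
        · exact h' rfl
      have rvw : samePart R.1 v w := (hy' v w (Ne.symm huv) hwu).2 (Or.inr ⟨Tv, Tw⟩)
      have nrvu : ¬ samePart R.1 v u := fun h => nruv (samePart_symm h)
      have cw : ∀ b, b ≠ v → (samePart P.1 w b ↔ samePart R.1 w b) := by
        intro b hbv
        rcases eq_or_ne b w with rfl | hbw
        · exact iff_of_true (samePart_refl _ _) (samePart_refl _ _)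
        rcases eq_or_ne b u with rfl | hbu
        · refine iff_of_false (fun h => ?_) (fun h => ?_)
          · exact hwu (hPw b h).symm
          · exact nrvu (samePart_trans rvw h)
        · refine iff_of_false (fun h => ?_) (fun h => ?_)
          · exact hbw (hPw b h)
          · rcases (hy' w b hwu hbu).1 h with ⟨_, hT, _⟩ | ⟨_, hbT⟩
            · exact hT Tw
            · rcases hTel b hbT hbw with h' | h'
              · exact hbu h'
              · exact hbv h'
      have pairs : ∀ a b, a ≠ v → b ≠ v → (samePart P.1 a b ↔ samePart R.1 a b) := by
        intro a b ha hb
        rcases eq_or_ne a w with rfl | haw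
        · exact cw b hb
        rcases eq_or_ne b w with rfl | hbw
        · exact ⟨fun h => samePart_symm ((cw a ha).1 (samePart_symm h)),
                 fun h => samePart_symm ((cw a ha).2 (samePart_symm h))⟩
        · rw [hx' a b haw hbw]
          constructor
          · intro h
            rcases eq_or_ne a b with rfl | hab
            · exact Or.inl rfl
            · refine Or.inr ⟨?_, ?_, h⟩
              · rintro rfl
                rcases hPu b h with h' | h'
                · exact hab h'.symm
                · exact hb h'
              · rintro rfl
                rcases hPu a (samePart_symm h) with h' | h'
                · exact hab h'
                · exact ha h'
          · rintro (rfl | ⟨_, _, h⟩)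
            · exact samePart_refl _ _
            · exact h
      exact ⟨v, fun hEq => nruv (hEq ▸ pu), pairs⟩
    · -- x = w, y = v : P moved by u
      right
      have nruv : ¬ samePart R.1 u v := by
        intro h
        rcases (hx' u v (Ne.symm hwu) (Ne.symm hwv)).1 h with h' | ⟨h', _, _⟩
        · exact huv h'
        · exact h' rfl
      have ruw : samePart R.1 u w := (hy' u w huv hwv).2 (Or.inr ⟨Tu, Tw⟩)
      have cw : ∀ b, b ≠ u → (samePart P.1 w b ↔ samePart R.1 w b) := by
        intro b hbu
        rcases eq_or_ne b w with rfl | hbw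
        · exact iff_of_true (samePart_refl _ _) (samePart_refl _ _)
        rcases eq_or_ne b v with rfl | hbv
        · refine iff_of_false (fun h => ?_) (fun h => ?_)
          · exact hwv (hPw b h).symm
          · exact nruv (samePart_trans ruw h)
        · refine iff_of_false (fun h => ?_) (fun h => ?_)
          · exact hbw (hPw b h)
          · rcases (hy' w b hwv hbv).1 h with ⟨_, hT, _⟩ | ⟨_, hbT⟩
            · exact hT Tw
            · rcases hTel b hbT hbw with h' | h'
              · exact hbu h'
              · exact hbv h'
      have pairs : ∀ a b, a ≠ u → b ≠ u → (samePart P.1 a b ↔ samePart R.1 a b) := by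
        intro a b ha hb
        rcases eq_or_ne a w with rfl | haw
        · exact cw b hb
        rcases eq_or_ne b w with rfl | hbw
        · exact ⟨fun h => samePart_symm ((cw a ha).1 (samePart_symm h)),
                 fun h => samePart_symm ((cw a ha).2 (samePart_symm h))⟩
        · rw [hx' a b haw hbw]
          constructor
          · intro h; exact Or.inr ⟨ha, hb, h⟩
          · rintro (rfl | ⟨_, _, h⟩)
            · exact samePart_refl _ _
            · exact h
      exact ⟨u, fun hEq => nruv (hEq ▸ pu), pairs⟩
    · exact absurd rfl hxy
  refine ⟨⟨⟨Q1p, isp1⟩, ⟨Q2p, isp2⟩, adj1, adj2, nonadj, hcommon⟩, ?_⟩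
  intro hAll
  obtain ⟨R, hR1, hR2, hRne, hRnadj⟩ := hAll _ _ adj1 adj2 nonadj
  rcases hcommon R hR1 hR2 with rfl | h
  · exact hRne rfl
  · exact hRnadj h
end
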